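/- arXiv:2507.02435 — 8 statements merged into one kernel-verified Lean document; each statement's English description precedes it below -/
import Mathlib

section
/- For every complex number q with |q| < 1, the following identity holds: ∏_{k=0}^{∞} (1 + q^{2k+1}) / ∏_{k=0}^{∞} (1 - q^{k+1}) = 1 / ( ∏_{k=0}^{∞} (1 - q^{4k+4}) · (∏_{k=0}^{∞} (1 - q^{4k+1}))^2 · (∏_{k=0}^{∞} (1 - q^{4k+3}))^2 ). In q-Pochhammer notation: (-q; q^2)_∞ / (q; q)_∞ = 1 / ( (q^4; q^4)_∞ · (q; q^4)_∞^2 · (q^3; q^4)_∞^2 ). (This expresses that the generating function for cylindric partitions of profile c = (1,1) given by Theorem 5 agrees with Borodin's infinite product.) -/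
open Complex Filter

/-- General helper: if `g` is absolutely summable and each `1 + g n ≠ 0`, then the product
`∏' (1 + g n)` converges and is nonzero. -/
lemma mult_aux {g : ℕ → ℂ} (hs : Summable fun n => ‖g n‖) (hn : ∀ n, 1 + g n ≠ 0) :
    Multipliable (fun n => 1 + g n) ∧ (∏' n, (1 + g n)) ≠ 0 := by
  have hlog : Summable fun n => Complex.log (1 + g n) := by
    have htend : Tendsto (fun n => ‖g n‖) atTop (nhds 0) := hs.tendsto_atTop_zero
    have hev : ∀ᶠ n in atTop, ‖Complex.log (1 + g n)‖ ≤ (3/2) * ‖g n‖ := by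
      filter_upwards [htend.eventually_le_const (by norm_num : (0:ℝ) < 1/2)] with n hn2
      exact Complex.norm_log_one_add_half_le_self hn2
    exact ((hs.mul_left (3/2)).of_norm_bounded_eventually_nat hev)
  refine ⟨Complex.multipliable_of_summable_log hlog, ?_⟩
  have := Complex.cexp_tsum_eq_tprod (f := fun n => 1 + g n) hn hlog
  rw [← this]
  exact Complex.exp_ne_zero _

/-- Specialized helper for q-Pochhammer style products. -/
lemma mult_q {q : ℂ} (hq : ‖q‖ < 1) (c : ℂ) (hc : ‖c‖ ≤ 1) (a b : ℕ)
    (ha : 1 ≤ a) (hb : 1 ≤ b) :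
    Multipliable (fun k : ℕ => 1 + c * q ^ (a * k + b)) ∧
      (∏' k : ℕ, (1 + c * q ^ (a * k + b))) ≠ 0 := by
  have hq' : ‖q‖ < 1 := by simpa using hq
  have hq0 : (0:ℝ) ≤ ‖q‖ := norm_nonneg q
  have hbound : ∀ k : ℕ, ‖c * q ^ (a * k + b)‖ ≤ ‖q‖ ^ k := by
    intro k
    rw [norm_mul, norm_pow]
    calc ‖c‖ * ‖q‖ ^ (a * k + b) ≤ 1 * ‖q‖ ^ (a * k + b) := by
          gcongr
      _ = ‖q‖ ^ (a * k + b) := one_mul _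
      _ ≤ ‖q‖ ^ k := by
          apply pow_le_pow_of_le_one hq0 hq'.le
          nlinarith [Nat.one_le_iff_ne_zero.mp ha]
  have hs : Summable fun k : ℕ => ‖c * q ^ (a * k + b)‖ :=
    (summable_geometric_of_lt_one hq0 hq').of_nonneg_of_le
      (fun _ => norm_nonneg _) hbound
  have hn : ∀ k : ℕ, 1 + c * q ^ (a * k + b) ≠ 0 := by
    intro k h
    have h1 : c * q ^ (a * k + b) = -1 := by linear_combination h
    have h2 : ‖c * q ^ (a * k + b)‖ < 1 := by
      calc ‖c * q ^ (a * k + b)‖ = ‖c‖ * ‖q‖ ^ (a * k + b) := by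
            rw [norm_mul, norm_pow]
        _ ≤ 1 * ‖q‖ ^ (a * k + b) := by gcongr
        _ = ‖q‖ ^ (a * k + b) := one_mul _
        _ ≤ ‖q‖ ^ 1 := pow_le_pow_of_le_one hq0 hq'.le (by omega)
        _ < 1 := by simpa using hq'
    rw [h1] at h2
    simp at h2
  exact mult_aux hs hn

lemma split_go {f g h : ℕ → ℂ} (hg : Multipliable g) (hh : Multipliable h)
    (e1 : ∀ k, g k = f (2 * k)) (e2 : ∀ k, h k = f (2 * k + 1)) :
    (∏' k, g k) * (∏' k, h k) = ∏' k, f k := by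
  rw [tprod_congr e1, tprod_congr e2]
  exact tprod_even_mul_odd (hg.congr e1) (hh.congr e2)

lemma mul_go {f g h : ℕ → ℂ} (hf : Multipliable f) (hg : Multipliable g)
    (e : ∀ k, f k * g k = h k) :
    (∏' k, f k) * (∏' k, g k) = ∏' k, h k := by
  rw [← Multipliable.tprod_mul hf hg]; exact tprod_congr e

/-- The generating function for cylindric partitions of profile `c = (1,1)`,
`(-q; q^2)_∞ / (q; q)_∞`, equals Borodin's infinite product
`1 / ((q^4; q^4)_∞ (q; q^4)_∞^2 (q^3; q^4)_∞^2)`. -/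
theorem profile_one_one (q : ℂ) (hq : ‖q‖ < 1) :
    (∏' k : ℕ, (1 + q ^ (2 * k + 1))) / (∏' k : ℕ, (1 - q ^ (k + 1))) =
      1 / ((∏' k : ℕ, (1 - q ^ (4 * k + 4))) *
        (∏' k : ℕ, (1 - q ^ (4 * k + 1))) ^ 2 *
        (∏' k : ℕ, (1 - q ^ (4 * k + 3))) ^ 2) := by
  obtain ⟨mA, -⟩ := mult_q hq 1 (by norm_num) 2 1 (by norm_num) le_rfl
  have eA : (fun k : ℕ => 1 + (1:ℂ) * q ^ (2*k+1)) = fun k : ℕ => 1 + q^(2*k+1) := by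
    funext k; ring
  rw [eA] at mA
  obtain ⟨mB, nB⟩ := mult_q hq (-1) (by norm_num) 1 1 le_rfl le_rfl
  have eB : (fun k : ℕ => 1 + (-1:ℂ) * q ^ (1*k+1)) = fun k : ℕ => 1 - q^(k+1) := by
    funext k; ring
  rw [eB] at mB nB
  obtain ⟨mD1, nD1⟩ := mult_q hq (-1) (by norm_num) 2 1 (by norm_num) le_rfl
  have eD1 : (fun k : ℕ => 1 + (-1:ℂ) * q ^ (2*k+1)) = fun k : ℕ => 1 - q^(2*k+1) := by
    funext k; ring
  rw [eD1] at mD1 nD1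
  obtain ⟨mD2, nD2⟩ := mult_q hq (-1) (by norm_num) 2 2 (by norm_num) (by norm_num)
  have eD2 : (fun k : ℕ => 1 + (-1:ℂ) * q ^ (2*k+2)) = fun k : ℕ => 1 - q^(2*k+2) := by
    funext k; ring
  rw [eD2] at mD2 nD2
  obtain ⟨mC1, nC1⟩ := mult_q hq (-1) (by norm_num) 4 1 (by norm_num) le_rfl
  have eC1 : (fun k : ℕ => 1 + (-1:ℂ) * q ^ (4*k+1)) = fun k : ℕ => 1 - q^(4*k+1) := by
    funext k; ring
  rw [eC1] at mC1 nC1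
  obtain ⟨mE2, nE2⟩ := mult_q hq (-1) (by norm_num) 4 2 (by norm_num) (by norm_num)
  have eE2 : (fun k : ℕ => 1 + (-1:ℂ) * q ^ (4*k+2)) = fun k : ℕ => 1 - q^(4*k+2) := by
    funext k; ring
  rw [eE2] at mE2 nE2
  obtain ⟨mC3, nC3⟩ := mult_q hq (-1) (by norm_num) 4 3 (by norm_num) (by norm_num)
  have eC3 : (fun k : ℕ => 1 + (-1:ℂ) * q ^ (4*k+3)) = fun k : ℕ => 1 - q^(4*k+3) := by
    funext k; ring
  rw [eC3] at mC3 nC3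
  obtain ⟨mC4, nC4⟩ := mult_q hq (-1) (by norm_num) 4 4 (by norm_num) (by norm_num)
  have eC4 : (fun k : ℕ => 1 + (-1:ℂ) * q ^ (4*k+4)) = fun k : ℕ => 1 - q^(4*k+4) := by
    funext k; ring
  rw [eC4] at mC4 nC4
  have splitB : (∏' k : ℕ, (1 - q^(2*k+1))) * (∏' k : ℕ, (1 - q^(2*k+2)))
      = ∏' k : ℕ, (1 - q^(k+1)) :=
    split_go mD1 mD2 (fun k => by ring) (fun k => by ring)
  have splitD1 : (∏' k : ℕ, (1 - q^(4*k+1))) * (∏' k : ℕ, (1 - q^(4*k+3)))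
      = ∏' k : ℕ, (1 - q^(2*k+1)) :=
    split_go mC1 mC3 (fun k => by ring) (fun k => by ring)
  have splitD2 : (∏' k : ℕ, (1 - q^(4*k+2))) * (∏' k : ℕ, (1 - q^(4*k+4)))
      = ∏' k : ℕ, (1 - q^(2*k+2)) :=
    split_go mE2 mC4 (fun k => by ring) (fun k => by ring)
  have prodA : (∏' k : ℕ, (1 + q^(2*k+1))) * (∏' k : ℕ, (1 - q^(2*k+1)))
      = ∏' k : ℕ, (1 - q^(4*k+2)) :=
    mul_go mA mD1 (fun k => by ring)
  have hden : (∏' k : ℕ, (1 - q ^ (4 * k + 4))) *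
      (∏' k : ℕ, (1 - q ^ (4 * k + 1))) ^ 2 *
      (∏' k : ℕ, (1 - q ^ (4 * k + 3))) ^ 2 ≠ 0 :=
    mul_ne_zero (mul_ne_zero nC4 (pow_ne_zero 2 nC1)) (pow_ne_zero 2 nC3)
  rw [div_eq_div_iff nB hden, ← splitB, ← splitD2, ← prodA, ← splitD1]
  ring
end

section
/- For every complex number q with |q| < 1, the following identity holds: ( ∑_{n=0}^{∞} q^{n^2} / (q^2; q^2)_n ) · (-q^2; q^2)_∞ / (q; q)_∞ = 1 / ( (q; q)_∞ · (q; q^6)_∞ · (q^3; q^6)_∞ · (q^5; q^6)_∞ ), where (q^2; q^2)_n = ∏_{j=0}^{n-1} (1 - q^{2j+2}), (-q^2; q^2)_∞ = ∏_{k=0}^{∞} (1 + q^{2k+2}), (q; q)_∞ = ∏_{k=0}^{∞} (1 - q^{k+1}), and (q^m; q^6)_∞ = ∏_{k=0}^{∞} (1 - q^{6k+m}). (This expresses that the generating function for cylindric partitions of profile c = (3,1) given by Theorem 9 agrees with Borodin's infinite product.) -/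
open Filter Finset Topology

namespace P31

variable {q : ℂ}

lemma one_add_ne {a : ℂ} (ha : ‖a‖ < 1) : 1 + a ≠ 0 := by
  intro h
  have : a = -1 := by linear_combination h
  rw [this] at ha; simp at ha

lemma summable_abs_pow (hq : ‖q‖ < 1) (c d : ℕ) (hc : 1 ≤ c) :
    Summable (fun n : ℕ => ‖q ^ (c * n + d)‖) := by
  have r0 : 0 ≤ ‖q‖ := norm_nonneg q
  apply Summable.of_nonneg_of_le (fun n => by positivity)
    (fun n => ?_) (summable_geometric_of_lt_one r0 hq)
  rw [norm_pow]
  exact pow_le_pow_of_le_one r0 hq.le (le_trans (Nat.le_mul_of_pos_left n hc) (Nat.le_add_right _ _))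

lemma log_summable (a : ℕ → ℂ) (ha : Summable fun n => ‖a n‖) :
    Summable fun n => Complex.log (1 + a n) := by
  have h0 : Tendsto (fun n => ‖a n‖) atTop (𝓝 0) := ha.tendsto_atTop_zero
  apply Summable.of_norm_bounded_eventually_nat (g := fun n => 3 / 2 * ‖a n‖)
    (ha.mul_left _)
  filter_upwards [h0.eventually_lt_const (by norm_num : (0 : ℝ) < 1 / 2)] with n hn
  exact Complex.norm_log_one_add_half_le_self (by simpa using hn.le)


lemma key (a : ℕ → ℂ) (ha : Summable fun n => ‖a n‖) (h1 : ∀ n, 1 + a n ≠ 0) :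
    Multipliable (fun n => 1 + a n) ∧ (∏' n : ℕ, (1 + a n)) ≠ 0 := by
  have hlog := log_summable a ha
  constructor
  · exact Complex.multipliable_of_summable_log hlog
  · rw [← Complex.cexp_tsum_eq_tprod h1 hlog]
    exact Complex.exp_ne_zero _

lemma keyP (hq : ‖q‖ < 1) (c d : ℕ) (hc : 1 ≤ c) (hd : 1 ≤ d) (σ : ℂ)
    (hσ : ‖σ‖ = 1) :
    Multipliable (fun n : ℕ => 1 + σ * q ^ (c * n + d)) ∧
      (∏' n : ℕ, (1 + σ * q ^ (c * n + d))) ≠ 0 := by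
  have habs : ∀ n : ℕ, ‖σ * q ^ (c * n + d)‖ = ‖q ^ (c * n + d)‖ := by
    intro n; rw [norm_mul, hσ, one_mul]
  apply key
  · exact (summable_abs_pow hq c d hc).congr (fun n => (habs n).symm)
  · intro n
    apply one_add_ne
    rw [habs, norm_pow]
    calc ‖q‖ ^ (c * n + d) ≤ ‖q‖ ^ 1 :=
          pow_le_pow_of_le_one (norm_nonneg q) hq.le
            (le_trans hd (Nat.le_add_left _ _))
      _ < 1 := by simpa using hq

lemma tprod_mod (f : ℕ → ℂ) (m : ℕ) (hm : 0 < m) (hf : Multipliable f)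
    (hs : ∀ i, i < m → Multipliable fun k : ℕ => f (m * k + i)) :
    ∏' n : ℕ, f n = ∏ i ∈ range m, ∏' k : ℕ, f (m * k + i) := by
  have hmul : Tendsto (fun N : ℕ => m * N) atTop atTop :=
    tendsto_atTop_mono (fun N => Nat.le_mul_of_pos_left N hm) tendsto_id
  have h1 : Tendsto (fun N : ℕ => ∏ n ∈ range (m * N), f n) atTop (𝓝 (∏' n : ℕ, f n)) :=
    hf.hasProd.tendsto_prod_nat.comp hmul
  have h2 : ∀ N : ℕ, ∏ n ∈ range (m * N), f n = ∏ i ∈ range m, ∏ k ∈ range N, f (m * k + i) := by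
    intro N
    induction N with
    | zero => simp
    | succ N ih =>
      rw [Nat.mul_succ, Finset.prod_range_add, ih]
      rw [← Finset.prod_mul_distrib]
      exact Finset.prod_congr rfl fun i _ => by rw [Finset.prod_range_succ]
  have h3 : Tendsto (fun N : ℕ => ∏ i ∈ range m, ∏ k ∈ range N, f (m * k + i)) atTop
      (𝓝 (∏ i ∈ range m, ∏' k : ℕ, f (m * k + i))) :=
    tendsto_finset_prod _ fun i hi => ((hs i (mem_range.mp hi)).hasProd.tendsto_prod_nat)
  exact tendsto_nhds_unique ((h1.congr h2)) h3

noncomputable def P (q : ℂ) (n : ℕ) : ℂ := ∏ j ∈ range n, (1 - q ^ (2 * j + 2))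

noncomputable def S (q : ℂ) (z : ℂ) : ℂ := ∑' n : ℕ, q ^ (n ^ 2) * z ^ n / P q n

lemma abs_pow_lt (hq : ‖q‖ < 1) {m : ℕ} (hm : 1 ≤ m) : ‖q ^ m‖ < 1 := by
  rw [norm_pow]
  calc ‖q‖ ^ m ≤ ‖q‖ ^ 1 :=
        pow_le_pow_of_le_one (norm_nonneg q) hq.le hm
    _ < 1 := by simpa using hq

lemma factor_ne (hq : ‖q‖ < 1) (j : ℕ) : 1 - q ^ (2 * j + 2) ≠ 0 := by
  have := one_add_ne (a := -q ^ (2 * j + 2)) (by simpa using abs_pow_lt hq (by omega))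
  intro h; apply this; linear_combination h

lemma P_ne (hq : ‖q‖ < 1) (n : ℕ) : P q n ≠ 0 :=
  Finset.prod_ne_zero_iff.mpr fun j _ => factor_ne hq j

lemma P_lb (hq : ‖q‖ < 1) : ∃ c0 : ℝ, 0 < c0 ∧ ∀ n, c0 ≤ ‖P q n‖ := by
  have hsum : Summable fun j : ℕ => Complex.log (1 + -q ^ (2 * j + 2)) := by
    apply log_summable
    exact (summable_abs_pow hq 2 2 one_le_two).congr (fun n => by simp)
  have hsumn : Summable fun j : ℕ => ‖Complex.log (1 + -q ^ (2 * j + 2))‖ := by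
    rwa [← summable_norm_iff] at hsum
  set L : ℝ := ∑' j : ℕ, ‖Complex.log (1 + -q ^ (2 * j + 2))‖ with hL
  refine ⟨Real.exp (-L), Real.exp_pos _, fun n => ?_⟩
  have hPexp : P q n = Complex.exp (∑ j ∈ range n, Complex.log (1 + -q ^ (2 * j + 2))) := by
    rw [Complex.exp_sum]
    apply Finset.prod_congr rfl
    intro j _
    rw [Complex.exp_log (by simpa [sub_eq_add_neg] using factor_ne hq j)]
    ring
  rw [hPexp, Complex.norm_exp]
  apply Real.exp_le_exp.mpr
  have h1 : -‖∑ j ∈ range n, Complex.log (1 + -q ^ (2 * j + 2))‖ ≤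
      (∑ j ∈ range n, Complex.log (1 + -q ^ (2 * j + 2))).re := by
    have h2 := abs_le.mp (Complex.abs_re_le_norm
      (∑ j ∈ range n, Complex.log (1 + -q ^ (2 * j + 2))))
    simpa using h2.1
  refine le_trans (neg_le_neg ?_) h1
  calc ‖∑ j ∈ range n, Complex.log (1 + -q ^ (2 * j + 2))‖
      ≤ ∑ j ∈ range n, ‖Complex.log (1 + -q ^ (2 * j + 2))‖ := norm_sum_le _ _
    _ ≤ L := Summable.sum_le_tsum _ (fun _ _ => norm_nonneg _) hsumn

lemma term_bound (hq : ‖q‖ < 1) {c0 : ℝ} (hc0 : 0 < c0)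
    (hP : ∀ n, c0 ≤ ‖P q n‖) {z : ℂ} (hz : ‖z‖ ≤ 1) (n : ℕ) :
    ‖q ^ (n ^ 2) * z ^ n / P q n‖ ≤ c0⁻¹ * ‖q‖ ^ n := by
  have r0 : 0 ≤ ‖q‖ := norm_nonneg q
  have hPn : (0 : ℝ) < ‖P q n‖ := lt_of_lt_of_le hc0 (hP n)
  rw [norm_div, norm_mul, norm_pow, norm_pow, div_le_iff₀ hPn]
  calc ‖q‖ ^ n ^ 2 * ‖z‖ ^ n
      ≤ ‖q‖ ^ n * 1 :=
        mul_le_mul (pow_le_pow_of_le_one r0 hq.le (Nat.le_self_pow two_ne_zero n))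
          (pow_le_one₀ (norm_nonneg z) hz) (by positivity) (by positivity)
    _ = c0 * (c0⁻¹ * ‖q‖ ^ n) := by field_simp
    _ ≤ ‖P q n‖ * (c0⁻¹ * ‖q‖ ^ n) :=
        mul_le_mul_of_nonneg_right (hP n) (by positivity)
    _ = c0⁻¹ * ‖q‖ ^ n * ‖P q n‖ := by ring

lemma S_summable (hq : ‖q‖ < 1) {z : ℂ} (hz : ‖z‖ ≤ 1) :
    Summable (fun n : ℕ => q ^ (n ^ 2) * z ^ n / P q n) := by
  obtain ⟨c0, hc0, hP⟩ := P_lb hq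
  apply Summable.of_norm_bounded ((summable_geometric_of_lt_one
    (norm_nonneg q) hq).mul_left c0⁻¹) (term_bound hq hc0 hP hz)

lemma S_rec (hq : ‖q‖ < 1) {z : ℂ} (hz : ‖z‖ ≤ 1) :
    S q z = (1 + z * q) * S q (z * q ^ 2) := by
  have hz2 : ‖z * q ^ 2‖ ≤ 1 := by
    rw [norm_mul]
    exact mul_le_one₀ hz (norm_nonneg _) (abs_pow_lt hq (by omega)).le
  have hf := S_summable hq hz
  have hg := S_summable hq hz2
  have hdiff : S q z - S q (z * q ^ 2) = z * q * S q (z * q ^ 2) := by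
    rw [show S q z - S q (z * q ^ 2)
        = ∑' n : ℕ, (q ^ (n ^ 2) * z ^ n / P q n - q ^ (n ^ 2) * (z * q ^ 2) ^ n / P q n) from
      (Summable.tsum_sub hf hg).symm]
    rw [Summable.tsum_eq_zero_add (hf.sub hg)]
    have h0 : q ^ (0 ^ 2) * z ^ 0 / P q 0 - q ^ (0 ^ 2) * (z * q ^ 2) ^ 0 / P q 0 = 0 := by
      simp
    rw [h0, zero_add]
    have hterm : ∀ n : ℕ,
        q ^ ((n + 1) ^ 2) * z ^ (n + 1) / P q (n + 1)
          - q ^ ((n + 1) ^ 2) * (z * q ^ 2) ^ (n + 1) / P q (n + 1)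
        = z * q * (q ^ (n ^ 2) * (z * q ^ 2) ^ n / P q n) := by
      intro n
      have hPs : P q (n + 1) = P q n * (1 - q ^ (2 * n + 2)) := Finset.prod_range_succ _ _
      have h1 : (n + 1) ^ 2 = n ^ 2 + (2 * n + 1) := by ring
      have h2 : 2 * n + 2 = (2 * n + 1) + 1 := by ring
      rw [hPs, h1]
      field_simp [P_ne hq n, factor_ne hq n]
      ring
    rw [tsum_congr hterm, tsum_mul_left]
    rfl
  linear_combination hdiff

lemma S_iter (hq : ‖q‖ < 1) (N : ℕ) :
    S q 1 = (∏ k ∈ range N, (1 + q ^ (2 * k + 1))) * S q (q ^ (2 * N)) := by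
  induction N with
  | zero => simp
  | succ N ih =>
    have habs : ‖q ^ (2 * N)‖ ≤ 1 := by
      rcases Nat.eq_zero_or_pos N with h | h
      · simp [h]
      · exact (abs_pow_lt hq (by omega)).le
    have hrec := S_rec hq habs
    rw [ih, hrec, Finset.prod_range_succ]
    have e1 : q ^ (2 * N) * q = q ^ (2 * N + 1) := by ring
    have e2 : q ^ (2 * N) * q ^ 2 = q ^ (2 * (N + 1)) := by ring
    rw [e1, e2]
    ring

lemma S_one (hq : ‖q‖ < 1) : S q 1 = ∏' k : ℕ, (1 + q ^ (2 * k + 1)) := by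
  obtain ⟨c0, hc0, hP⟩ := P_lb hq
  have r0 : 0 ≤ ‖q‖ := norm_nonneg q
  -- multipliability of the odd product
  have hMO : Multipliable (fun k : ℕ => 1 + q ^ (2 * k + 1)) := by
    have := keyP hq 2 1 one_le_two le_rfl 1 (by simp)
    exact this.1.congr (fun k => by rw [one_mul])
  have h1 : Tendsto (fun N : ℕ => ∏ k ∈ range N, (1 + q ^ (2 * k + 1))) atTop
      (𝓝 (∏' k : ℕ, (1 + q ^ (2 * k + 1)))) := hMO.hasProd.tendsto_prod_nat
  -- S (q ^ (2N)) → 1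
  have hbound : ∀ N : ℕ, ‖S q (q ^ (2 * N)) - 1‖ ≤
      c0⁻¹ * (1 - ‖q‖)⁻¹ * ‖q‖ ^ (2 * N) := by
    intro N
    set w : ℂ := q ^ (2 * N) with hw
    have hwle : ‖w‖ ≤ 1 := by
      rcases Nat.eq_zero_or_pos N with h | h
      · simp [hw, h]
      · exact (abs_pow_lt hq (by omega)).le
    have hsum := S_summable hq hwle
    have hS1 : S q w - 1 = ∑' n : ℕ, q ^ ((n + 1) ^ 2) * w ^ (n + 1) / P q (n + 1) := by
      rw [S, Summable.tsum_eq_zero_add hsum]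
      simp [P]
    rw [hS1]
    have hterm : ∀ n : ℕ, ‖q ^ ((n + 1) ^ 2) * w ^ (n + 1) / P q (n + 1)‖ ≤
        c0⁻¹ * ‖w‖ * ‖q‖ ^ n := by
      intro n
      have hPn : (0 : ℝ) < ‖P q (n + 1)‖ := lt_of_lt_of_le hc0 (hP (n + 1))
      rw [norm_div, norm_mul, norm_pow, norm_pow, div_le_iff₀ hPn]
      calc ‖q‖ ^ (n + 1) ^ 2 * ‖w‖ ^ (n + 1)
          ≤ ‖q‖ ^ n * (‖w‖ * 1) := by
            apply mul_le_mul
            · exact pow_le_pow_of_le_one r0 hq.le (by nlinarith)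
            · rw [pow_succ']
              exact mul_le_mul_of_nonneg_left (pow_le_one₀ (norm_nonneg w) hwle)
                (norm_nonneg w)
            · positivity
            · positivity
        _ = c0 * (c0⁻¹ * ‖w‖ * ‖q‖ ^ n) := by field_simp
        _ ≤ ‖P q (n + 1)‖ * (c0⁻¹ * ‖w‖ * ‖q‖ ^ n) :=
            mul_le_mul_of_nonneg_right (hP (n + 1)) (by positivity)
        _ = c0⁻¹ * ‖w‖ * ‖q‖ ^ n * ‖P q (n + 1)‖ := by ring
    have hgs : Summable (fun n : ℕ => c0⁻¹ * ‖w‖ * ‖q‖ ^ n) :=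
      (summable_geometric_of_lt_one r0 hq).mul_left _
    calc ‖∑' n : ℕ, q ^ ((n + 1) ^ 2) * w ^ (n + 1) / P q (n + 1)‖
        ≤ ∑' n : ℕ, (c0⁻¹ * ‖w‖ * ‖q‖ ^ n) :=
          tsum_of_norm_bounded hgs.hasSum hterm
      _ = c0⁻¹ * ‖w‖ * (1 - ‖q‖)⁻¹ := by
          rw [tsum_mul_left, tsum_geometric_of_lt_one r0 hq]
      _ = c0⁻¹ * (1 - ‖q‖)⁻¹ * ‖q‖ ^ (2 * N) := by
          rw [hw, norm_pow]; ring
  have h2 : Tendsto (fun N : ℕ => S q (q ^ (2 * N))) atTop (𝓝 1) := by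
    rw [← tendsto_sub_nhds_zero_iff]
    apply squeeze_zero_norm hbound
    have : Tendsto (fun N : ℕ => ‖q‖ ^ (2 * N)) atTop (𝓝 0) := by
      have h := tendsto_pow_atTop_nhds_zero_of_lt_one (by positivity : (0:ℝ) ≤ ‖q‖ ^ 2)
        (by nlinarith [norm_nonneg q] : ‖q‖ ^ 2 < 1)
      exact h.congr (fun N => by rw [← pow_mul, mul_comm])
    simpa using this.const_mul (c0⁻¹ * (1 - ‖q‖)⁻¹)
  have h3 : Tendsto (fun N : ℕ => (∏ k ∈ range N, (1 + q ^ (2 * k + 1))) * S q (q ^ (2 * N)))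
      atTop (𝓝 ((∏' k : ℕ, (1 + q ^ (2 * k + 1))) * 1)) := h1.mul h2
  have h4 : Tendsto (fun _ : ℕ => S q 1) atTop (𝓝 (S q 1)) := tendsto_const_nhds
  have := tendsto_nhds_unique (h4.congr (fun N => S_iter hq N)) h3
  rw [this, mul_one]


lemma keyP' (hq : ‖q‖ < 1) (c d : ℕ) (hc : 1 ≤ c) (hd : 1 ≤ d) (σ : ℂ)
    (hσ : ‖σ‖ = 1) (g : ℕ → ℂ) (hg : ∀ n, g n = 1 + σ * q ^ (c * n + d)) :
    Multipliable g ∧ (∏' n : ℕ, g n) ≠ 0 := by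
  obtain ⟨h1, h2⟩ := keyP hq c d hc hd σ hσ
  refine ⟨h1.congr fun n => (hg n).symm, ?_⟩
  rw [tprod_congr hg]; exact h2

end P31


/-- The generating function for cylindric partitions of profile `c = (3,1)`,
`(∑ q^{n^2}/(q^2;q^2)_n) · (-q^2; q^2)_∞ / (q; q)_∞`, equals Borodin's infinite product
`1 / ((q; q)_∞ (q; q^6)_∞ (q^3; q^6)_∞ (q^5; q^6)_∞)`. -/
theorem profile_three_one (q : ℂ) (hq : ‖q‖ < 1) :
    (∑' n : ℕ, q ^ (n ^ 2) / ∏ j ∈ Finset.range n, (1 - q ^ (2 * j + 2))) *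
        (∏' k : ℕ, (1 + q ^ (2 * k + 2))) / (∏' k : ℕ, (1 - q ^ (k + 1))) =
      1 / ((∏' k : ℕ, (1 - q ^ (k + 1))) * (∏' k : ℕ, (1 - q ^ (6 * k + 1))) *
        (∏' k : ℕ, (1 - q ^ (6 * k + 3))) * ∏' k : ℕ, (1 - q ^ (6 * k + 5))) := by
  obtain ⟨MB, B0⟩ := P31.keyP' hq 1 1 le_rfl le_rfl (-1) (by simp)
    (fun k => 1 - q ^ (k + 1)) (fun k => by ring)
  obtain ⟨MA, A0⟩ := P31.keyP' hq 2 2 one_le_two one_le_two 1 (by simp)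
    (fun k => 1 + q ^ (2 * k + 2)) (fun k => by ring)
  obtain ⟨MO, O0⟩ := P31.keyP' hq 2 1 one_le_two le_rfl 1 (by simp)
    (fun k => 1 + q ^ (2 * k + 1)) (fun k => by ring)
  obtain ⟨MT, T0⟩ := P31.keyP' hq 1 1 le_rfl le_rfl 1 (by simp)
    (fun k => 1 + q ^ (k + 1)) (fun k => by ring)
  obtain ⟨ME2, E20⟩ := P31.keyP' hq 2 2 one_le_two one_le_two (-1) (by simp)
    (fun k => 1 - q ^ (2 * k + 2)) (fun k => by ring)
  obtain ⟨MOdd, Odd0⟩ := P31.keyP' hq 2 1 one_le_two le_rfl (-1) (by simp)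
    (fun k => 1 - q ^ (2 * k + 1)) (fun k => by ring)
  obtain ⟨MC, C0⟩ := P31.keyP' hq 6 1 (by norm_num) le_rfl (-1) (by simp)
    (fun k => 1 - q ^ (6 * k + 1)) (fun k => by ring)
  obtain ⟨MD, D0⟩ := P31.keyP' hq 6 3 (by norm_num) (by norm_num) (-1) (by simp)
    (fun k => 1 - q ^ (6 * k + 3)) (fun k => by ring)
  obtain ⟨ME5, E50⟩ := P31.keyP' hq 6 5 (by norm_num) (by norm_num) (-1) (by simp)
    (fun k => 1 - q ^ (6 * k + 5)) (fun k => by ring)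
  -- the Euler sum
  have hSum : (∑' n : ℕ, q ^ (n ^ 2) / ∏ j ∈ Finset.range n, (1 - q ^ (2 * j + 2)))
      = ∏' k : ℕ, (1 + q ^ (2 * k + 1)) := by
    rw [← P31.S_one hq, P31.S]
    exact tsum_congr fun n => by rw [one_pow, mul_one, P31.P]
  -- splitting T = O * A
  have hsplit2T : (∏' k : ℕ, (1 + q ^ (k + 1)))
      = (∏' k : ℕ, (1 + q ^ (2 * k + 1))) * ∏' k : ℕ, (1 + q ^ (2 * k + 2)) := by
    have h := P31.tprod_mod (fun k => 1 + q ^ (k + 1)) 2 two_pos MT (by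
      intro i hi
      interval_cases i
      · exact MO.congr fun k => by norm_num
      · exact MA.congr fun k => by norm_num)
    rw [h, Finset.prod_range_succ, Finset.prod_range_one]
  -- splitting B = Odd * E2
  have hsplit2B : (∏' k : ℕ, (1 - q ^ (k + 1)))
      = (∏' k : ℕ, (1 - q ^ (2 * k + 1))) * ∏' k : ℕ, (1 - q ^ (2 * k + 2)) := by
    have h := P31.tprod_mod (fun k => 1 - q ^ (k + 1)) 2 two_pos MB (by
      intro i hi
      interval_cases i
      · exact MOdd.congr fun k => by norm_num
      · exact ME2.congr fun k => by norm_num)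
    rw [h, Finset.prod_range_succ, Finset.prod_range_one]
  -- splitting Odd = C * D * E5
  have hsplit3 : (∏' k : ℕ, (1 - q ^ (2 * k + 1)))
      = (∏' k : ℕ, (1 - q ^ (6 * k + 1))) * (∏' k : ℕ, (1 - q ^ (6 * k + 3)))
        * ∏' k : ℕ, (1 - q ^ (6 * k + 5)) := by
    have h := P31.tprod_mod (fun k => 1 - q ^ (2 * k + 1)) 3 three_pos MOdd (by
      intro i hi
      interval_cases i
      · exact MC.congr fun k => by ring
      · exact MD.congr fun k => by ring
      · exact ME5.congr fun k => by ring)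
    rw [h, Finset.prod_range_succ, Finset.prod_range_succ, Finset.prod_range_one]
    congr 1
    · congr 1
      · exact tprod_congr fun k => by ring
      · exact tprod_congr fun k => by ring
    · exact tprod_congr fun k => by ring
  -- T * B = E2
  have hE2 : (∏' k : ℕ, (1 + q ^ (k + 1))) * (∏' k : ℕ, (1 - q ^ (k + 1)))
      = ∏' k : ℕ, (1 - q ^ (2 * k + 2)) := by
    rw [← Multipliable.tprod_mul MT MB]
    exact tprod_congr fun k => by ring
  -- T * Odd = 1
  have hTOdd : (∏' k : ℕ, (1 + q ^ (k + 1))) * (∏' k : ℕ, (1 - q ^ (2 * k + 1))) = 1 := by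
    apply mul_right_cancel₀ E20
    rw [one_mul, mul_assoc, ← hsplit2B]
    exact hE2
  rw [hsplit3] at hTOdd
  rw [hSum, div_eq_div_iff B0 (by
    exact mul_ne_zero (mul_ne_zero (mul_ne_zero B0 C0) D0) E50)]
  linear_combination ((∏' k : ℕ, (1 - q ^ (k + 1))) * (∏' k : ℕ, (1 - q ^ (6 * k + 1))) *
      (∏' k : ℕ, (1 - q ^ (6 * k + 3))) * (∏' k : ℕ, (1 - q ^ (6 * k + 5)))) * hsplit2T.symm
    + (∏' k : ℕ, (1 - q ^ (k + 1))) * hTOdd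
end

section
/- (Lemma 1, second identity.) For every complex number q with |q| < 1, every natural number k ≥ 0 and every integer n ≥ 2, ( ∏_{j=0}^{n-1} q^{2k+2j+1} ) / ( ∏_{j=0}^{n} (1 + q^{2k+2j}) ) = ( q / (1 - q^{2n}) ) · ( - ( ∏_{j=1}^{n-1} q^{2k+2j+1} ) / ( ∏_{j=0}^{n-1} (1 + q^{2k+2j}) ) + ( ∏_{j=1}^{n-1} q^{2k+2j+1} ) / ( ∏_{j=1}^{n} (1 + q^{2k+2j}) ) ). Equivalently, the numerator of the left-hand side equals q^{2kn + n^2} and the numerators on the right-hand side equal q^{2k(n-1) + n^2 - 1}. -/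
/-- Lemma 1, second identity: for `n ≥ 2`,
`(∏_{j=0}^{n-1} q^{2k+2j+1}) / (∏_{j=0}^{n} (1+q^{2k+2j}))
  = (q/(1-q^{2n})) (-(∏_{j=1}^{n-1} q^{2k+2j+1}) / (∏_{j=0}^{n-1} (1+q^{2k+2j}))
      + (∏_{j=1}^{n-1} q^{2k+2j+1}) / (∏_{j=1}^{n} (1+q^{2k+2j})))`. -/
theorem lemma1_second (q : ℂ) (hq : ‖q‖ < 1) (k : ℕ) (n : ℕ) (hn : 2 ≤ n) :
    (∏ j ∈ Finset.range n, q ^ (2 * k + 2 * j + 1)) /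
        ∏ j ∈ Finset.range (n + 1), (1 + q ^ (2 * k + 2 * j)) =
      q / (1 - q ^ (2 * n)) *
        (-(∏ j ∈ Finset.Icc 1 (n - 1), q ^ (2 * k + 2 * j + 1)) /
            (∏ j ∈ Finset.range n, (1 + q ^ (2 * k + 2 * j))) +
          (∏ j ∈ Finset.Icc 1 (n - 1), q ^ (2 * k + 2 * j + 1)) /
            ∏ j ∈ Finset.Icc 1 n, (1 + q ^ (2 * k + 2 * j))) := by
  obtain ⟨m, rfl⟩ : ∃ m, n = m + 2 := ⟨n - 2, by omega⟩
  have hf : ∀ j : ℕ, (1 : ℂ) + q ^ (2 * k + 2 * j) ≠ 0 := by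
    intro j h
    rcases Nat.eq_zero_or_pos (2 * k + 2 * j) with h0 | hpos
    · rw [h0] at h; norm_num at h
    · have hq1 : ‖q ^ (2 * k + 2 * j)‖ < 1 := by
        rw [norm_pow]
        exact pow_lt_one₀ (norm_nonneg q) hq (by omega)
      have : q ^ (2 * k + 2 * j) = -1 := by linear_combination h
      rw [this] at hq1; simp at hq1
  have h2n : (1 : ℂ) - q ^ (2 * (m + 2)) ≠ 0 := by
    intro h
    have hq1 : ‖q ^ (2 * (m + 2))‖ < 1 := by
      rw [norm_pow]
      exact pow_lt_one₀ (norm_nonneg q) hq (by omega)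
    have : q ^ (2 * (m + 2)) = 1 := by linear_combination -h
    rw [this] at hq1; simp at hq1
  have hIcc1 : Finset.Icc 1 (m + 2 - 1) = Finset.Icc 1 (m + 1) := by norm_num
  rw [hIcc1]
  rw [show Finset.Icc 1 (m + 1) = Finset.Ico 1 (m + 2) from rfl,
    show Finset.Icc 1 (m + 2) = Finset.Ico 1 (m + 3) from rfl,
    Finset.prod_Ico_eq_prod_range, Finset.prod_Ico_eq_prod_range]
  simp only [show m + 2 - 1 = m + 1 from rfl, show m + 3 - 1 = m + 2 from rfl,
    show m + 2 + 1 = m + 3 from rfl]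
  set A := ∏ x ∈ Finset.range (m + 1), q ^ (2 * k + 2 * (1 + x) + 1) with hAdef
  set B := ∏ x ∈ Finset.range (m + 1), ((1 : ℂ) + q ^ (2 * k + 2 * (1 + x))) with hBdef
  have hB : B ≠ 0 := by
    rw [hBdef]; exact Finset.prod_ne_zero_iff.mpr fun j _ => hf _
  have h1 : (∏ j ∈ Finset.range (m + 2), q ^ (2 * k + 2 * j + 1))
      = q ^ (2 * k + 1) * A := by
    rw [Finset.prod_range_succ', mul_comm]
    congr 1
    · rw [hAdef]
      exact Finset.prod_congr rfl fun j _ => by rw [Nat.add_comm j 1]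
  have h3 : (∏ j ∈ Finset.range (m + 2), ((1 : ℂ) + q ^ (2 * k + 2 * j)))
      = (1 + q ^ (2 * k)) * B := by
    rw [Finset.prod_range_succ', mul_comm]
    congr 1
    · rw [hBdef]
      exact Finset.prod_congr rfl fun j _ => by rw [Nat.add_comm j 1]
  have h2 : (∏ j ∈ Finset.range (m + 3), ((1 : ℂ) + q ^ (2 * k + 2 * j)))
      = (1 + q ^ (2 * k)) * B * (1 + q ^ (2 * k + 2 * (m + 2))) := by
    rw [show m + 3 = (m + 2) + 1 from rfl, Finset.prod_range_succ, h3]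
  have h4 : (∏ x ∈ Finset.range (m + 2), ((1 : ℂ) + q ^ (2 * k + 2 * (1 + x))))
      = B * (1 + q ^ (2 * k + 2 * (m + 2))) := by
    rw [Finset.prod_range_succ, show 1 + (m + 1) = m + 2 by omega]
  rw [h1, h2, h3, h4]
  have hf0 := hf 0
  have hfm2 := hf (m + 2)
  simp only [Nat.mul_zero, Nat.add_zero] at hf0
  field_simp
  ring
end

section
/- (Lemma 2.) For every complex number q with |q| < 1 and every integer m ≥ 1, ∑_{k=1}^{∞} q^{2km + m^2} / ( ∏_{j=0}^{m} (1 + q^{2k+2j}) ) = ( q^{2m} / (1 - q^{2m}) ) · q^{m^2} / ( ∏_{j=1}^{m} (1 + q^{2j}) ). Here q^{2km + m^2} = q^{2k+1} · q^{2k+3} ⋯ q^{2k+2m-1} and q^{m^2} = q^1 · q^3 ⋯ q^{2m-1}; the series converges absolutely since |q| < 1. -/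
lemma lemma2_aux (x y c P Q : ℂ) (hPA : Q * (1 + x * y) = P * (1 + x))
    (hP : P ≠ 0) (hQ : Q ≠ 0) (hB : (1 + x * y) ≠ 0) (hD : (1 - y) ≠ 0) :
    c / (Q * (1 + x * y)) = c / ((1 - y) * Q) - c * y / ((1 - y) * P) := by
  rw [div_sub_div _ _ (mul_ne_zero hD hQ) (mul_ne_zero hD hP),
    div_eq_div_iff (mul_ne_zero hQ hB) (mul_ne_zero (mul_ne_zero hD hQ) (mul_ne_zero hD hP))]
  linear_combination (c * (1 - y) * y * Q) * hPA

/-- Lemma 2: for `m ≥ 1`,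
`∑_{k=1}^∞ q^{2km+m^2} / ∏_{j=0}^{m} (1+q^{2k+2j})
  = (q^{2m}/(1-q^{2m})) · q^{m^2} / ∏_{j=1}^{m} (1+q^{2j})`.
The sum over `k ≥ 1` is written as a sum over `k : ℕ` with `k` replaced by `k + 1`. -/
theorem lemma2 (q : ℂ) (hq : ‖q‖ < 1) (m : ℕ) (hm : 1 ≤ m) :
    (∑' k : ℕ, q ^ (2 * (k + 1) * m + m ^ 2) /
        ∏ j ∈ Finset.range (m + 1), (1 + q ^ (2 * (k + 1) + 2 * j))) =
      q ^ (2 * m) / (1 - q ^ (2 * m)) *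
        (q ^ (m ^ 2) / ∏ j ∈ Finset.Icc 1 m, (1 + q ^ (2 * j))) := by
  set r := ‖q‖ with hr
  have hr0 : 0 ≤ r := norm_nonneg q
  have habs : ∀ n : ℕ, ‖q ^ n‖ = r ^ n := by
    intro n; simp [hr, norm_pow]
  have hpowlt : ∀ n : ℕ, 1 ≤ n → ‖q ^ n‖ < 1 := by
    intro n hn; rw [habs]; exact pow_lt_one₀ hr0 hq (by omega)
  have hne : ∀ n : ℕ, 1 ≤ n → 1 + q ^ n ≠ 0 := by
    intro n hn h
    have h1 : q ^ n = -1 := by linear_combination h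
    have := hpowlt n hn
    rw [h1] at this; simp at this
  have hD : 1 - q ^ (2 * m) ≠ 0 := by
    intro h
    have h1 : q ^ (2 * m) = 1 := by linear_combination -h
    have := hpowlt (2 * m) (by omega)
    rw [h1] at this; simp at this
  have hDapos : 0 < ‖1 - q ^ (2 * m)‖ := norm_pos_iff.mpr hD
  -- the telescoping auxiliary sequence
  set g : ℕ → ℂ := fun k =>
    q ^ (2 * (k + 1) * m + m ^ 2) /
      ((1 - q ^ (2 * m)) * ∏ j ∈ Finset.range m, (1 + q ^ (2 * (k + 1) + 2 * j))) with hg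
  have hQne : ∀ k : ℕ, (∏ j ∈ Finset.range m, (1 + q ^ (2 * (k + 1) + 2 * j))) ≠ 0 := by
    intro k
    exact Finset.prod_ne_zero_iff.2 fun j _ => hne _ (by omega)
  -- each term is a telescoping difference
  have key : ∀ k : ℕ,
      q ^ (2 * (k + 1) * m + m ^ 2) /
          ∏ j ∈ Finset.range (m + 1), (1 + q ^ (2 * (k + 1) + 2 * j)) =
        g k - g (k + 1) := by
    intro k
    have hfull1 :
        (∏ j ∈ Finset.range (m + 1), (1 + q ^ (2 * (k + 1) + 2 * j))) =
          (∏ j ∈ Finset.range m, (1 + q ^ (2 * (k + 1) + 2 * j))) *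
            (1 + q ^ (2 * (k + 1) + 2 * m)) := Finset.prod_range_succ _ _
    have hfull2 :
        (∏ j ∈ Finset.range (m + 1), (1 + q ^ (2 * (k + 1) + 2 * j))) =
          (∏ j ∈ Finset.range m, (1 + q ^ (2 * (k + 1 + 1) + 2 * j))) *
            (1 + q ^ (2 * (k + 1))) := by
      rw [Finset.prod_range_succ']
      simp only [Nat.mul_zero, Nat.add_zero, mul_zero, add_zero]
      congr 1
      refine Finset.prod_congr rfl fun j _ => ?_
      rw [show 2 * (k + 1) + 2 * (j + 1) = 2 * (k + 1 + 1) + 2 * j from by omega]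
    have hQB : (∏ j ∈ Finset.range m, (1 + q ^ (2 * (k + 1) + 2 * j))) *
          (1 + q ^ (2 * (k + 1)) * q ^ (2 * m)) =
        (∏ j ∈ Finset.range m, (1 + q ^ (2 * (k + 1 + 1) + 2 * j))) *
            (1 + q ^ (2 * (k + 1))) := by
      rw [← pow_add, show 2 * (k + 1) + 2 * m = 2 * (k + 1) + 2 * m from rfl,
        ← hfull1, hfull2]
    have := lemma2_aux (q ^ (2 * (k + 1))) (q ^ (2 * m))
      (q ^ (2 * (k + 1) * m + m ^ 2))
      (∏ j ∈ Finset.range m, (1 + q ^ (2 * (k + 1 + 1) + 2 * j)))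
      (∏ j ∈ Finset.range m, (1 + q ^ (2 * (k + 1) + 2 * j)))
      hQB (hQne (k + 1)) (hQne k)
      (by rw [← pow_add]; exact hne _ (by omega)) hD
    have eB : q ^ (2 * (k + 1) + 2 * m) = q ^ (2 * (k + 1)) * q ^ (2 * m) := by
      rw [← pow_add]
    have eN : q ^ (2 * (k + 1 + 1) * m + m ^ 2) =
        q ^ (2 * (k + 1) * m + m ^ 2) * q ^ (2 * m) := by
      rw [← pow_add]; congr 1; ring
    rw [hfull1, hg]
    simp only
    rw [eB, eN]
    exact this
  -- norm bounds
  have h1r2 : 0 < 1 - r ^ 2 := by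
    have : r ^ 2 < 1 := pow_lt_one₀ hr0 hq (by omega)
    linarith
  have hlow : ∀ (k n : ℕ), 1 ≤ k →
      (1 - r ^ 2) ^ n ≤ ‖∏ j ∈ Finset.range n, (1 + q ^ (2 * k + 2 * j))‖ := by
    intro k n hk
    rw [norm_prod]
    calc (1 - r ^ 2) ^ n = ∏ _j ∈ Finset.range n, (1 - r ^ 2) := by
          rw [Finset.prod_const, Finset.card_range]
      _ ≤ ∏ j ∈ Finset.range n, ‖1 + q ^ (2 * k + 2 * j)‖ := by
          refine Finset.prod_le_prod (fun j _ => h1r2.le) fun j _ => ?_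
          have h2 : ‖q ^ (2 * k + 2 * j)‖ ≤ r ^ 2 := by
            rw [habs]
            exact pow_le_pow_of_le_one hr0 hq.le (by omega)
          have h3 : ‖(1 : ℂ)‖ - ‖-(q ^ (2 * k + 2 * j))‖ ≤ ‖1 - -(q ^ (2 * k + 2 * j))‖ :=
            norm_sub_norm_le _ _
          simp only [norm_one, norm_neg, sub_neg_eq_add] at h3
          linarith
  have hs1 : r ^ (2 * m) < 1 := pow_lt_one₀ hr0 hq (by omega)
  have hs0 : 0 ≤ r ^ (2 * m) := by positivity
  have hiter : ∀ k : ℕ, r ^ (2 * (k + 1) * m + m ^ 2) =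
      r ^ (2 * m + m ^ 2) * (r ^ (2 * m)) ^ k := by
    intro k
    rw [← pow_mul, ← pow_add]; congr 1; ring
  -- bound for g
  have hgbound : ∀ k : ℕ, ‖g k‖ ≤
      (r ^ (2 * m + m ^ 2) / (‖1 - q ^ (2 * m)‖ * (1 - r ^ 2) ^ m)) *
        (r ^ (2 * m)) ^ k := by
    intro k
    rw [hg]
    simp only [norm_div, norm_mul, habs]
    calc r ^ (2 * (k + 1) * m + m ^ 2) /
          (‖1 - q ^ (2 * m)‖ *
            ‖∏ j ∈ Finset.range m, (1 + q ^ (2 * (k + 1) + 2 * j))‖)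
        ≤ r ^ (2 * (k + 1) * m + m ^ 2) /
            (‖1 - q ^ (2 * m)‖ * (1 - r ^ 2) ^ m) := by
          apply div_le_div_of_nonneg_left (by positivity) (by positivity)
          exact mul_le_mul_of_nonneg_left (hlow (k + 1) m (by omega)) hDapos.le
      _ = (r ^ (2 * m + m ^ 2) / (‖1 - q ^ (2 * m)‖ * (1 - r ^ 2) ^ m)) *
            (r ^ (2 * m)) ^ k := by
          rw [hiter k]; ring
  -- g tends to 0
  have hgten : Filter.Tendsto g Filter.atTop (nhds 0) := by
    apply squeeze_zero_norm hgbound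
    have h0 : Filter.Tendsto (fun k : ℕ => (r ^ (2 * m)) ^ k) Filter.atTop (nhds 0) :=
      tendsto_pow_atTop_nhds_zero_of_lt_one hs0 hs1
    have h := h0.const_mul
      (r ^ (2 * m + m ^ 2) / (‖1 - q ^ (2 * m)‖ * (1 - r ^ 2) ^ m))
    simpa using h
  -- summability of the terms
  have hsummable : Summable (fun k : ℕ =>
      q ^ (2 * (k + 1) * m + m ^ 2) /
        ∏ j ∈ Finset.range (m + 1), (1 + q ^ (2 * (k + 1) + 2 * j))) := by
    apply Summable.of_norm_bounded (g :=
      fun k => (r ^ (2 * m + m ^ 2) / (1 - r ^ 2) ^ (m + 1)) * (r ^ (2 * m)) ^ k)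
      (Summable.mul_left _ (summable_geometric_of_lt_one hs0 hs1))
    intro k
    simp only [norm_div, habs]
    calc r ^ (2 * (k + 1) * m + m ^ 2) /
          ‖∏ j ∈ Finset.range (m + 1), (1 + q ^ (2 * (k + 1) + 2 * j))‖
        ≤ r ^ (2 * (k + 1) * m + m ^ 2) / (1 - r ^ 2) ^ (m + 1) := by
          apply div_le_div_of_nonneg_left (by positivity) (by positivity)
          exact hlow (k + 1) (m + 1) (by omega)
      _ = (r ^ (2 * m + m ^ 2) / (1 - r ^ 2) ^ (m + 1)) * (r ^ (2 * m)) ^ k := by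
          rw [hiter k]; ring
  -- identify the sum via telescoping
  have hsum : HasSum (fun k : ℕ =>
      q ^ (2 * (k + 1) * m + m ^ 2) /
        ∏ j ∈ Finset.range (m + 1), (1 + q ^ (2 * (k + 1) + 2 * j))) (g 0) := by
    rw [hasSum_iff_tendsto_nat_of_summable_norm hsummable.norm]
    have hps : ∀ n : ℕ, (∑ k ∈ Finset.range n,
        q ^ (2 * (k + 1) * m + m ^ 2) /
          ∏ j ∈ Finset.range (m + 1), (1 + q ^ (2 * (k + 1) + 2 * j))) = g 0 - g n := by
      intro n
      rw [Finset.sum_congr rfl fun k _ => key k]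
      exact Finset.sum_range_sub' g n
    simp only [hps]
    have := Filter.Tendsto.const_sub (g 0) hgten
    simpa using this
  rw [hsum.tsum_eq]
  -- compute g 0
  rw [hg]
  simp only
  have hIcc : (∏ j ∈ Finset.Icc 1 m, (1 + q ^ (2 * j))) =
      ∏ j ∈ Finset.range m, (1 + q ^ (2 * (0 + 1) + 2 * j)) := by
    rw [show Finset.Icc 1 m = Finset.Ico 1 (m + 1) from rfl,
      Finset.prod_Ico_eq_prod_range]
    simp only [Nat.add_sub_cancel]
    refine Finset.prod_congr rfl fun j _ => ?_
    rw [show 2 * (1 + j) = 2 * (0 + 1) + 2 * j from by omega]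
  rw [hIcc]
  rw [show 2 * (0 + 1) * m + m ^ 2 = 2 * m + m ^ 2 from by ring, pow_add,
    div_mul_div_comm]
end

section
/- (Intermediate identity (18) in the proof of Lemma 3.) For every complex number q with |q| < 1 and all integers k₁ ≥ 1, m₁ ≥ 1 and m₂ ≥ 1, ∑_{k₂=1}^{∞} q^{m₂(2k₁ + 2k₂ + 2m₁) + m₂^2} / ( ∏_{j=0}^{m₂} (1 + q^{2k₁ + 2k₂ + 2m₁ + 2j}) ) = q^{2m₂} · q^{m₂(2k₁ + 2m₁) + m₂^2} / ( (1 - q^{2m₂}) · ∏_{j=1}^{m₂} (1 + q^{2k₁ + 2m₁ + 2j}) ). Here q^{m₂(2k₁+2k₂+2m₁)+m₂^2} = q^{2k₁+2k₂+2m₁+1} · q^{2k₁+2k₂+2m₁+3} ⋯ q^{2k₁+2k₂+2m₁+2m₂-1}. -/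
open Finset Filter Topology

private lemma aux_ne (q : ℂ) (hq : ‖q‖ < 1) {e : ℕ} (he : 1 ≤ e) : 1 + q ^ e ≠ 0 := by
  intro h
  have h1 : q ^ e = -1 := by linear_combination h
  have h2 : ‖q‖ ^ e = 1 := by rw [← norm_pow, h1]; simp
  have h3 : ‖q‖ ^ e ≤ ‖q‖ ^ 1 := pow_le_pow_of_le_one (norm_nonneg q) hq.le he
  rw [h2, pow_one] at h3
  linarith

private lemma aux_norm (q : ℂ) (hq : ‖q‖ < 1) {e : ℕ} (he : 1 ≤ e) :
    1 - ‖q‖ ≤ ‖1 + q ^ e‖ := by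
  have h1 : ‖q ^ e‖ ≤ ‖q‖ := by
    rw [norm_pow]
    calc ‖q‖ ^ e ≤ ‖q‖ ^ 1 := pow_le_pow_of_le_one (norm_nonneg q) hq.le he
    _ = ‖q‖ := pow_one _
  have h2 := norm_sub_norm_le (1 : ℂ) (-(q ^ e))
  simp only [sub_neg_eq_add, norm_neg, norm_one] at h2
  linarith

private lemma aux_prod_norm (q : ℂ) (hq : ‖q‖ < 1) (s : Finset ℕ) (e : ℕ → ℕ)
    (he : ∀ j ∈ s, 1 ≤ e j) :
    (1 - ‖q‖) ^ s.card ≤ ‖∏ j ∈ s, (1 + q ^ e j)‖ := by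
  rw [norm_prod, ← Finset.prod_const]
  exact Finset.prod_le_prod (fun _ _ => by linarith) (fun j hj => aux_norm q hq (he j hj))

/-- Identity (18) in the proof of Lemma 3: for `k₁, m₁, m₂ ≥ 1`,
`∑_{k₂=1}^∞ q^{m₂(2k₁+2k₂+2m₁)+m₂^2} / ∏_{j=0}^{m₂} (1+q^{2k₁+2k₂+2m₁+2j})
  = q^{2m₂} q^{m₂(2k₁+2m₁)+m₂^2} / ((1-q^{2m₂}) ∏_{j=1}^{m₂} (1+q^{2k₁+2m₁+2j}))`.
The sum over `k₂ ≥ 1` is written as a sum over `k₂ : ℕ` with `k₂` replaced by `k₂ + 1`. -/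
theorem lemma3_intermediate (q : ℂ) (hq : ‖q‖ < 1)
    (k₁ m₁ m₂ : ℕ) (hk₁ : 1 ≤ k₁) (hm₁ : 1 ≤ m₁) (hm₂ : 1 ≤ m₂) :
    (∑' k₂ : ℕ, q ^ (m₂ * (2 * k₁ + 2 * (k₂ + 1) + 2 * m₁) + m₂ ^ 2) /
        ∏ j ∈ Finset.range (m₂ + 1), (1 + q ^ (2 * k₁ + 2 * (k₂ + 1) + 2 * m₁ + 2 * j))) =
      q ^ (2 * m₂) * q ^ (m₂ * (2 * k₁ + 2 * m₁) + m₂ ^ 2) /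
        ((1 - q ^ (2 * m₂)) * ∏ j ∈ Finset.Icc 1 m₂, (1 + q ^ (2 * k₁ + 2 * m₁ + 2 * j))) := by
  have hqn : ‖q‖ < 1 := hq
  have hq0 : (0:ℝ) ≤ ‖q‖ := norm_nonneg q
  have hexp : ∀ {x y : ℕ}, x = y → (1:ℂ) + q ^ x = 1 + q ^ y := fun h => by rw [h]
  have ht' : (1 : ℂ) - q ^ (2 * m₂) ≠ 0 := by
    rw [sub_ne_zero]
    intro h
    have h2 : ‖q‖ ^ (2*m₂) = 1 := by rw [← norm_pow, ← h]; simp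
    have h3 : ‖q‖ ^ (2*m₂) ≤ ‖q‖ ^ 1 := pow_le_pow_of_le_one hq0 hqn.le (by omega)
    rw [h2, pow_one] at h3
    linarith
  set a : ℕ → ℂ := fun k₂ => q ^ (m₂ * (2 * k₁ + 2 * (k₂ + 1) + 2 * m₁) + m₂ ^ 2) /
        ∏ j ∈ Finset.range (m₂ + 1), (1 + q ^ (2 * k₁ + 2 * (k₂ + 1) + 2 * m₁ + 2 * j)) with ha
  set b : ℕ → ℂ := fun n => q ^ (m₂ * (2 * k₁ + 2 * m₁ + 2 * n) + m₂ ^ 2) /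
        ∏ j ∈ Finset.Icc 1 m₂, (1 + q ^ (2 * k₁ + 2 * m₁ + 2 * n + 2 * j)) with hb
  set t : ℂ := q ^ (2 * m₂) with htdef
  -- Icc products as range products
  have hIcc : ∀ c : ℕ, ∏ j ∈ Finset.Icc 1 m₂, (1 + q ^ (c + 2 * j))
      = ∏ j ∈ Finset.range m₂, (1 + q ^ (c + 2 + 2 * j)) := by
    intro c
    rw [← Finset.Ico_add_one_right_eq_Icc, Finset.prod_Ico_eq_prod_range]
    simp only [Nat.succ_sub_one, Nat.add_sub_cancel]
    exact Finset.prod_congr rfl fun j _ => hexp (by ring)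
  -- key pointwise identity (telescoping form)
  have key : ∀ n : ℕ, a n = t / (1 - t) * (b n - b (n + 1)) := by
    intro n
    have hQ0 : (∏ j ∈ Finset.range m₂, (1 + q ^ (2*k₁+2*m₁+2*n + 2 + 2 * j))) ≠ 0 :=
      Finset.prod_ne_zero_iff.mpr (fun j _ => aux_ne q hqn (by omega))
    have hQ1 : (∏ j ∈ Finset.range m₂, (1 + q ^ (2*k₁+2*m₁+2*(n+1) + 2 + 2 * j))) ≠ 0 :=
      Finset.prod_ne_zero_iff.mpr (fun j _ => aux_ne q hqn (by omega))
    have hx : (1 : ℂ) + q ^ (2*k₁+2*m₁+2*n+2) ≠ 0 := aux_ne q hqn (by omega)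
    have hsplit : ∏ j ∈ Finset.range (m₂ + 1), (1 + q ^ (2 * k₁ + 2 * (n + 1) + 2 * m₁ + 2 * j))
        = (1 + q ^ (2*k₁+2*m₁+2*n+2)) *
          ∏ j ∈ Finset.range m₂, (1 + q ^ (2*k₁+2*m₁+2*(n+1) + 2 + 2 * j)) := by
      rw [Finset.prod_range_succ', mul_comm]
      exact congrArg₂ (· * ·) (hexp (by ring))
        (Finset.prod_congr rfl fun j _ => hexp (by ring))
    have hrel : (∏ j ∈ Finset.range m₂, (1 + q ^ (2*k₁+2*m₁+2*n + 2 + 2 * j))) *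
          (1 + q ^ (2*k₁+2*m₁+2*n+2+2*m₂))
        = (1 + q ^ (2*k₁+2*m₁+2*n+2)) *
          ∏ j ∈ Finset.range m₂, (1 + q ^ (2*k₁+2*m₁+2*(n+1) + 2 + 2 * j)) := by
      have h1 := Finset.prod_range_succ (fun j => (1:ℂ) + q ^ (2*k₁+2*m₁+2*n+2 + 2 * j)) m₂
      have h2 := Finset.prod_range_succ' (fun j => (1:ℂ) + q ^ (2*k₁+2*m₁+2*n+2 + 2 * j)) m₂
      rw [h1] at h2
      calc (∏ j ∈ Finset.range m₂, (1 + q ^ (2*k₁+2*m₁+2*n + 2 + 2 * j))) *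
            (1 + q ^ (2*k₁+2*m₁+2*n+2+2*m₂))
          = (∏ j ∈ Finset.range m₂, (1 + q ^ (2*k₁+2*m₁+2*n+2 + 2 * j))) *
            (1 + q ^ (2*k₁+2*m₁+2*n+2 + 2*m₂)) := by
            exact congrArg₂ (· * ·)
              (Finset.prod_congr rfl fun j _ => hexp (by ring)) (hexp (by ring))
        _ = (∏ k ∈ Finset.range m₂, (1 + q ^ (2*k₁+2*m₁+2*n+2 + 2 * (k+1)))) *
            (1 + q ^ (2*k₁+2*m₁+2*n+2 + 2*0)) := h2
        _ = (1 + q ^ (2*k₁+2*m₁+2*n+2)) *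
            ∏ j ∈ Finset.range m₂, (1 + q ^ (2*k₁+2*m₁+2*(n+1) + 2 + 2 * j)) := by
            rw [mul_comm]
            exact congrArg₂ (· * ·) (hexp (by ring))
              (Finset.prod_congr rfl fun j _ => hexp (by ring))
    simp only [ha, hb, htdef, hIcc, hsplit]
    rw [div_sub_div _ _ hQ0 hQ1, div_mul_div_comm,
      div_eq_div_iff (mul_ne_zero hx hQ1) (mul_ne_zero ht' (mul_ne_zero hQ0 hQ1))]
    linear_combination (q ^ (m₂ * (2 * k₁ + 2 * (n + 1) + 2 * m₁) + m₂ ^ 2) *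
      ∏ j ∈ Finset.range m₂, (1 + q ^ (2*k₁+2*m₁+2*(n+1) + 2 + 2 * j))) * hrel
  -- norm bounds
  have hC1 : (0:ℝ) < (1 - ‖q‖) ^ (m₂ + 1) := pow_pos (by linarith) _
  have hC2 : (0:ℝ) < (1 - ‖q‖) ^ m₂ := pow_pos (by linarith) _
  have hr : ‖q‖ ^ 2 < 1 := by nlinarith
  have hr0 : (0:ℝ) ≤ ‖q‖ ^ 2 := by positivity
  have hanorm : ∀ n : ℕ, ‖a n‖ ≤ (‖q‖ ^ 2) ^ n / (1 - ‖q‖) ^ (m₂ + 1) := by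
    intro n
    rw [ha]
    simp only [norm_div, norm_pow]
    have hden := aux_prod_norm q hqn (Finset.range (m₂ + 1))
      (fun j => 2 * k₁ + 2 * (n + 1) + 2 * m₁ + 2 * j)
      (fun j _ => by show 1 ≤ 2 * k₁ + 2 * (n + 1) + 2 * m₁ + 2 * j; omega)
    rw [Finset.card_range] at hden
    have hnum : ‖q‖ ^ (m₂ * (2 * k₁ + 2 * (n + 1) + 2 * m₁) + m₂ ^ 2) ≤ (‖q‖ ^ 2) ^ n := by
      rw [← pow_mul]
      exact pow_le_pow_of_le_one hq0 hqn.le (by nlinarith)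
    exact div_le_div₀ (by positivity) hnum hC1 hden
  have hbnorm : ∀ n : ℕ, ‖b n‖ ≤ (‖q‖ ^ 2) ^ n / (1 - ‖q‖) ^ m₂ := by
    intro n
    rw [hb]
    simp only [norm_div, norm_pow]
    have hden := aux_prod_norm q hqn (Finset.Icc 1 m₂)
      (fun j => 2 * k₁ + 2 * m₁ + 2 * n + 2 * j)
      (fun j hj => by show 1 ≤ 2 * k₁ + 2 * m₁ + 2 * n + 2 * j; omega)
    rw [Nat.card_Icc] at hden
    simp only [Nat.add_sub_cancel] at hden
    have hnum : ‖q‖ ^ (m₂ * (2 * k₁ + 2 * m₁ + 2 * n) + m₂ ^ 2) ≤ (‖q‖ ^ 2) ^ n := by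
      rw [← pow_mul]
      exact pow_le_pow_of_le_one hq0 hqn.le (by nlinarith)
    exact div_le_div₀ (by positivity) hnum hC2 hden
  -- summability
  have hsum : Summable a := by
    apply Summable.of_norm_bounded (Summable.div_const (summable_geometric_of_lt_one hr0 hr) _)
    exact hanorm
  -- b tends to 0
  have hb0 : Tendsto b atTop (𝓝 0) := by
    apply squeeze_zero_norm hbnorm
    have : Tendsto (fun n : ℕ => (‖q‖ ^ 2) ^ n) atTop (𝓝 0) :=
      tendsto_pow_atTop_nhds_zero_of_lt_one hr0 hr
    simpa using this.div_const ((1 - ‖q‖) ^ m₂)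
  -- telescoping
  have hps2 : ∀ N, ∑ n ∈ Finset.range N, a n = t / (1 - t) * (b 0 - b N) := by
    intro N
    simp only [key]
    rw [← Finset.mul_sum, Finset.sum_range_sub' b]
  have hlim : Tendsto (fun N => ∑ n ∈ Finset.range N, a n) atTop
      (𝓝 (t / (1 - t) * (b 0 - 0))) := by
    simp only [hps2]
    exact tendsto_const_nhds.mul (tendsto_const_nhds.sub hb0)
  have htsum : ∑' n, a n = t / (1 - t) * (b 0 - 0) :=
    tendsto_nhds_unique hsum.hasSum.tendsto_sum_nat hlim
  rw [htsum]
  rw [sub_zero, hb]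
  simp only [mul_zero, add_zero]
  rw [div_mul_div_comm]
end

section
/- (Lemma 3.) For every complex number q with |q| < 1 and all integers m₁ ≥ 1 and m₂ ≥ 1, ∑_{k₂=1}^{∞} ∑_{k₁=1}^{∞} q^{2k₁(m₁+m₂) + 2k₂ m₂ + (m₁+m₂)^2} / ( ∏_{j=0}^{m₁} (1 + q^{2k₁+2j}) · ∏_{j=0}^{m₂} (1 + q^{2k₁+2k₂+2m₁+2j}) ) = q^{2(m₁+m₂)} · q^{2m₂} · q^{(m₁+m₂)^2} / ( (1 - q^{2(m₁+m₂)}) · (1 - q^{2m₂}) · ∏_{j=1}^{m₁+m₂} (1 + q^{2j}) ). Here the numerator of the summand is q^{2k₁+1} q^{2k₁+3} ⋯ q^{2k₁+2m₁-1} · q^{2k₁+2k₂+2m₁+1} ⋯ q^{2k₁+2k₂+2m₁+2m₂-1}, and q^{(m₁+m₂)^2} = q^1 q^3 ⋯ q^{2(m₁+m₂)-1}. -/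
open Finset Filter Topology

namespace Lemma3Aux

lemma norm_one_add_pow {q : ℂ} (hq : ‖q‖ < 1) {e : ℕ} (he : 1 ≤ e) :
    1 - ‖q‖ ≤ ‖1 + q ^ e‖ := by
  have h1 : ‖q ^ e‖ ≤ ‖q‖ := by
    rw [norm_pow]
    exact pow_le_of_le_one (norm_nonneg q) hq.le (by omega)
  have h2 := norm_sub_norm_le (1 : ℂ) (-(q ^ e))
  simp only [norm_one, norm_neg, sub_neg_eq_add] at h2
  linarith

lemma one_add_pow_ne {q : ℂ} (hq : ‖q‖ < 1) {e : ℕ} (he : 1 ≤ e) :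
    (1 : ℂ) + q ^ e ≠ 0 := by
  intro h
  have := norm_one_add_pow hq he
  rw [h, norm_zero] at this
  linarith

lemma one_sub_pow_ne {q : ℂ} (hq : ‖q‖ < 1) {e : ℕ} (he : 1 ≤ e) :
    (1 : ℂ) - q ^ e ≠ 0 := by
  intro h
  have h1 : ‖q ^ e‖ ≤ ‖q‖ := by
    rw [norm_pow]; exact pow_le_of_le_one (norm_nonneg q) hq.le (by omega)
  have h2 : q ^ e = 1 := (sub_eq_zero.mp h).symm
  rw [h2, norm_one] at h1
  linarith

lemma prod_ne {q : ℂ} (hq : ‖q‖ < 1) (n : ℕ) (f : ℕ → ℕ) (hf : ∀ j, 1 ≤ f j) :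
    ∏ j ∈ Finset.range n, (1 + q ^ (f j)) ≠ 0 :=
  Finset.prod_ne_zero_iff.mpr fun j _ => one_add_pow_ne hq (hf j)

lemma norm_prod_ge {q : ℂ} (hq : ‖q‖ < 1) (n : ℕ) (f : ℕ → ℕ) (hf : ∀ j, 1 ≤ f j) :
    (1 - ‖q‖) ^ n ≤ ‖∏ j ∈ Finset.range n, (1 + q ^ (f j))‖ := by
  rw [norm_prod]
  calc (1 - ‖q‖) ^ n = ∏ _j ∈ Finset.range n, (1 - ‖q‖) := by
        rw [Finset.prod_const, Finset.card_range]
    _ ≤ ∏ j ∈ Finset.range n, ‖1 + q ^ (f j)‖ :=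
        Finset.prod_le_prod (fun _ _ => by linarith) (fun j _ => norm_one_add_pow hq (hf j))

/-- key telescoping sum -/
lemma telescope {q : ℂ} (hq : ‖q‖ < 1) (n c : ℕ) (hn : 1 ≤ n) :
    HasSum (fun k : ℕ => q ^ (2 * (k + 1) * n) /
        ∏ j ∈ Finset.range (n + 1), (1 + q ^ (2 * (k + 1 + c) + 2 * j)))
      (q ^ (2 * n) /
        ((1 - q ^ (2 * n)) * ∏ j ∈ Finset.range n, (1 + q ^ (2 * (1 + c) + 2 * j)))) := by
  set f : ℕ → ℂ := fun k => q ^ (2 * (k + 1) * n) /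
      ∏ j ∈ Finset.range (n + 1), (1 + q ^ (2 * (k + 1 + c) + 2 * j)) with hf
  set a : ℕ → ℂ := fun k => q ^ (2 * k * n) /
      ∏ j ∈ Finset.range n, (1 + q ^ (2 * (k + 1 + c) + 2 * j)) with ha
  have hz : (1 : ℂ) - q ^ (2 * n) ≠ 0 := one_sub_pow_ne hq (by omega)
  set C : ℂ := q ^ (2 * n) / (1 - q ^ (2 * n)) with hC
  have hpos : 0 < 1 - ‖q‖ := by linarith
  have claim1 : ∀ k, f k = C * (a k - a (k + 1)) := by
    intro k
    have hQ : (∏ j ∈ Finset.range (n+1), (1 + q ^ (2 * (k + 1 + c) + 2 * j))) ≠ 0 :=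
      prod_ne hq (n + 1) (fun j => 2 * (k + 1 + c) + 2 * j)
        (fun j => by show 1 ≤ 2 * (k + 1 + c) + 2 * j; omega)
    have hu : (1 : ℂ) + q ^ (2 * (k + 1 + c) + 2 * n) ≠ 0 := one_add_pow_ne hq (by omega)
    have hv : (1 : ℂ) + q ^ (2 * (k + 1 + c)) ≠ 0 := one_add_pow_ne hq (by omega)
    have e1 : ∏ j ∈ Finset.range (n + 1), (1 + q ^ (2 * (k + 1 + c) + 2 * j)) =
        (∏ j ∈ Finset.range n, (1 + q ^ (2 * (k + 1 + c) + 2 * j))) *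
          (1 + q ^ (2 * (k + 1 + c) + 2 * n)) := Finset.prod_range_succ _ _
    have e2 : ∏ j ∈ Finset.range (n + 1), (1 + q ^ (2 * (k + 1 + c) + 2 * j)) =
        (∏ j ∈ Finset.range n, (1 + q ^ (2 * (k + 1 + 1 + c) + 2 * j))) *
          (1 + q ^ (2 * (k + 1 + c))) := by
      rw [Finset.prod_range_succ' (fun j => (1 + q ^ (2 * (k + 1 + c) + 2 * j)))]
      exact congrArg₂ _
        (Finset.prod_congr rfl fun j _ => by
          rw [show 2 * (k + 1 + c) + 2 * (j + 1) = 2 * (k + 1 + 1 + c) + 2 * j from by ring])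
        (by norm_num)
    have rak : a k = q ^ (2 * k * n) * (1 + q ^ (2 * (k + 1 + c) + 2 * n)) /
        ∏ j ∈ Finset.range (n + 1), (1 + q ^ (2 * (k + 1 + c) + 2 * j)) := by
      simp only [ha]
      rw [e1, mul_div_mul_right _ _ hu]
    have rak1 : a (k + 1) = q ^ (2 * (k + 1) * n) * (1 + q ^ (2 * (k + 1 + c))) /
        ∏ j ∈ Finset.range (n + 1), (1 + q ^ (2 * (k + 1 + c) + 2 * j)) := by
      simp only [ha]
      rw [e2, mul_div_mul_right _ _ hv]
    rw [show f k = q ^ (2 * (k + 1) * n) /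
        ∏ j ∈ Finset.range (n + 1), (1 + q ^ (2 * (k + 1 + c) + 2 * j)) from rfl,
      rak, rak1, hC]
    field_simp
    ring
  have key : ((1 - ‖q‖)⁻¹ ^ n) * (1 - ‖q‖) ^ n = 1 := by
    rw [← mul_pow, inv_mul_cancel₀ hpos.ne', one_pow]
  have key1 : ((1 - ‖q‖)⁻¹ ^ (n + 1)) * (1 - ‖q‖) ^ (n + 1) = 1 := by
    rw [← mul_pow, inv_mul_cancel₀ hpos.ne', one_pow]
  have hbound : ∀ k, ‖a k‖ ≤ (1 - ‖q‖)⁻¹ ^ n * ‖q‖ ^ k := by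
    intro k
    have hP := norm_prod_ge hq n (fun j => 2 * (k + 1 + c) + 2 * j)
      (fun j => by show 1 ≤ 2 * (k + 1 + c) + 2 * j; omega)
    have hPne : (0:ℝ) < ‖∏ j ∈ Finset.range n, (1 + q ^ (2 * (k + 1 + c) + 2 * j))‖ :=
      lt_of_lt_of_le (pow_pos hpos n) hP
    have hnum : ‖q ^ (2 * k * n)‖ ≤ ‖q‖ ^ k := by
      rw [norm_pow]
      exact pow_le_pow_of_le_one (norm_nonneg q) hq.le (by nlinarith)
    simp only [ha, norm_div]
    rw [div_le_iff₀ hPne]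
    calc ‖q ^ (2 * k * n)‖ ≤ ‖q‖ ^ k := hnum
      _ = ((1 - ‖q‖)⁻¹ ^ n * ‖q‖ ^ k) * (1 - ‖q‖) ^ n := by
          rw [mul_comm ((1 - ‖q‖)⁻¹ ^ n) (‖q‖ ^ k), mul_assoc, key, mul_one]
      _ ≤ ((1 - ‖q‖)⁻¹ ^ n * ‖q‖ ^ k) *
            ‖∏ j ∈ Finset.range n, (1 + q ^ (2 * (k + 1 + c) + 2 * j))‖ := by
          apply mul_le_mul_of_nonneg_left hP
          positivity
  have htend : Tendsto a atTop (𝓝 0) := by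
    apply squeeze_zero_norm hbound
    rw [show (0:ℝ) = (1 - ‖q‖)⁻¹ ^ n * 0 by ring]
    exact (tendsto_pow_atTop_nhds_zero_of_lt_one (norm_nonneg q) hq).const_mul _
  have hfsum : Summable f := by
    apply Summable.of_norm_bounded (g := fun k => (1 - ‖q‖)⁻¹ ^ (n+1) * ‖q‖ ^ k)
      (((summable_geometric_of_lt_one (norm_nonneg q) hq)).mul_left _)
    intro k
    have hP := norm_prod_ge hq (n+1) (fun j => 2 * (k + 1 + c) + 2 * j)
      (fun j => by show 1 ≤ 2 * (k + 1 + c) + 2 * j; omega)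
    have hPne : (0:ℝ) < ‖∏ j ∈ Finset.range (n+1), (1 + q ^ (2 * (k + 1 + c) + 2 * j))‖ :=
      lt_of_lt_of_le (pow_pos hpos _) hP
    have hnum : ‖q ^ (2 * (k+1) * n)‖ ≤ ‖q‖ ^ k := by
      rw [norm_pow]
      exact pow_le_pow_of_le_one (norm_nonneg q) hq.le (by nlinarith)
    simp only [hf, norm_div]
    rw [div_le_iff₀ hPne]
    calc ‖q ^ (2 * (k+1) * n)‖ ≤ ‖q‖ ^ k := hnum
      _ = ((1 - ‖q‖)⁻¹ ^ (n+1) * ‖q‖ ^ k) * (1 - ‖q‖) ^ (n+1) := by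
          rw [mul_comm ((1 - ‖q‖)⁻¹ ^ (n+1)) (‖q‖ ^ k), mul_assoc, key1, mul_one]
      _ ≤ _ := by
          apply mul_le_mul_of_nonneg_left hP
          positivity
  have hps : ∀ N, ∑ k ∈ Finset.range N, f k = C * (a 0 - a N) := by
    intro N
    calc ∑ k ∈ Finset.range N, f k = ∑ k ∈ Finset.range N, C * (a k - a (k+1)) :=
          Finset.sum_congr rfl fun k _ => claim1 k
      _ = C * ∑ k ∈ Finset.range N, (a k - a (k+1)) := by rw [Finset.mul_sum]
      _ = C * (a 0 - a N) := by rw [Finset.sum_range_sub' a N]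
  have htend2 : Tendsto (fun N => ∑ k ∈ Finset.range N, f k) atTop (𝓝 (C * a 0)) := by
    simp only [hps]
    rw [show C * a 0 = C * (a 0 - 0) by ring]
    exact (tendsto_const_nhds.sub htend).const_mul C
  have hte : (∑' k, f k) = C * a 0 :=
    tendsto_nhds_unique hfsum.hasSum.tendsto_sum_nat htend2
  have ea0 : a 0 = 1 / ∏ j ∈ Finset.range n, (1 + q ^ (2 * (1 + c) + 2 * j)) := by
    simp only [ha]
    norm_num
  have hS : C * a 0 = q ^ (2 * n) /
      ((1 - q ^ (2 * n)) * ∏ j ∈ Finset.range n, (1 + q ^ (2 * (1 + c) + 2 * j))) := by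
    rw [ea0, hC, div_mul_div_comm, mul_one]
  rw [← hS, ← hte]
  exact hfsum.hasSum

end Lemma3Aux

open Lemma3Aux Finset in
/-- Lemma 3: for `m₁, m₂ ≥ 1`,
`∑_{k₂=1}^∞ ∑_{k₁=1}^∞ q^{2k₁(m₁+m₂)+2k₂m₂+(m₁+m₂)^2}
    / (∏_{j=0}^{m₁} (1+q^{2k₁+2j}) ∏_{j=0}^{m₂} (1+q^{2k₁+2k₂+2m₁+2j}))
  = q^{2(m₁+m₂)} q^{2m₂} q^{(m₁+m₂)^2}
    / ((1-q^{2(m₁+m₂)}) (1-q^{2m₂}) ∏_{j=1}^{m₁+m₂} (1+q^{2j}))`.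
The sums over `kᵢ ≥ 1` are written as sums over `kᵢ : ℕ` with `kᵢ` replaced by `kᵢ + 1`. -/
theorem lemma3 (q : ℂ) (hq : ‖q‖ < 1) (m₁ m₂ : ℕ) (hm₁ : 1 ≤ m₁) (hm₂ : 1 ≤ m₂) :
    (∑' k₂ : ℕ, ∑' k₁ : ℕ,
        q ^ (2 * (k₁ + 1) * (m₁ + m₂) + 2 * (k₂ + 1) * m₂ + (m₁ + m₂) ^ 2) /
          ((∏ j ∈ Finset.range (m₁ + 1), (1 + q ^ (2 * (k₁ + 1) + 2 * j))) *
            ∏ j ∈ Finset.range (m₂ + 1),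
              (1 + q ^ (2 * (k₁ + 1) + 2 * (k₂ + 1) + 2 * m₁ + 2 * j)))) =
      q ^ (2 * (m₁ + m₂)) * q ^ (2 * m₂) * q ^ ((m₁ + m₂) ^ 2) /
        ((1 - q ^ (2 * (m₁ + m₂))) * (1 - q ^ (2 * m₂)) *
          ∏ j ∈ Finset.Icc 1 (m₁ + m₂), (1 + q ^ (2 * j))) := by
  have hq' : ‖q‖ < 1 := by exact hq
  have hpos : 0 < 1 - ‖q‖ := by linarith
  set F : ℕ → ℕ → ℂ := fun k₂ k₁ =>
    q ^ (2 * (k₁ + 1) * (m₁ + m₂) + 2 * (k₂ + 1) * m₂ + (m₁ + m₂) ^ 2) /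
      ((∏ j ∈ Finset.range (m₁ + 1), (1 + q ^ (2 * (k₁ + 1) + 2 * j))) *
        ∏ j ∈ Finset.range (m₂ + 1),
          (1 + q ^ (2 * (k₁ + 1) + 2 * (k₂ + 1) + 2 * m₁ + 2 * j))) with hF
  -- summability of the double sum
  have keyC : ((1 - ‖q‖)⁻¹ ^ (m₁ + m₂ + 2)) * (1 - ‖q‖) ^ (m₁ + m₂ + 2) = 1 := by
    rw [← mul_pow, inv_mul_cancel₀ hpos.ne', one_pow]
  have hsum : Summable (Function.uncurry F) := by
    apply Summable.of_norm_bounded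
      (g := fun p : ℕ × ℕ => (1 - ‖q‖)⁻¹ ^ (m₁ + m₂ + 2) * (‖q‖ ^ p.1 * ‖q‖ ^ p.2))
    · exact (Summable.mul_of_nonneg (summable_geometric_of_lt_one (norm_nonneg q) hq')
        (summable_geometric_of_lt_one (norm_nonneg q) hq')
        (fun _ => pow_nonneg (norm_nonneg q) _)
        (fun _ => pow_nonneg (norm_nonneg q) _)).mul_left _
    rintro ⟨k₂, k₁⟩
    have hP1 := norm_prod_ge hq' (m₁ + 1) (fun j => 2 * (k₁ + 1) + 2 * j)
      (fun j => by show 1 ≤ 2 * (k₁ + 1) + 2 * j; omega)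
    have hP2 := norm_prod_ge hq' (m₂ + 1)
      (fun j => 2 * (k₁ + 1) + 2 * (k₂ + 1) + 2 * m₁ + 2 * j)
      (fun j => by show 1 ≤ 2 * (k₁ + 1) + 2 * (k₂ + 1) + 2 * m₁ + 2 * j; omega)
    have hD : (1 - ‖q‖) ^ (m₁ + m₂ + 2) ≤
        ‖(∏ j ∈ Finset.range (m₁ + 1), (1 + q ^ (2 * (k₁ + 1) + 2 * j))) *
          ∏ j ∈ Finset.range (m₂ + 1),
            (1 + q ^ (2 * (k₁ + 1) + 2 * (k₂ + 1) + 2 * m₁ + 2 * j))‖ := by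
      rw [norm_mul, show m₁ + m₂ + 2 = (m₁ + 1) + (m₂ + 1) from by ring, pow_add]
      exact mul_le_mul hP1 hP2 (pow_nonneg hpos.le _) (norm_nonneg _)
    have hDpos : (0:ℝ) < ‖(∏ j ∈ Finset.range (m₁ + 1), (1 + q ^ (2 * (k₁ + 1) + 2 * j))) *
          ∏ j ∈ Finset.range (m₂ + 1),
            (1 + q ^ (2 * (k₁ + 1) + 2 * (k₂ + 1) + 2 * m₁ + 2 * j))‖ :=
      lt_of_lt_of_le (pow_pos hpos _) hD
    have hnum : ‖q ^ (2 * (k₁ + 1) * (m₁ + m₂) + 2 * (k₂ + 1) * m₂ + (m₁ + m₂) ^ 2)‖ ≤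
        ‖q‖ ^ (k₂ + k₁) := by
      rw [norm_pow]
      exact pow_le_pow_of_le_one (norm_nonneg q) hq'.le (by nlinarith)
    show ‖F k₂ k₁‖ ≤ _
    rw [hF]
    simp only [norm_div]
    rw [div_le_iff₀ hDpos]
    calc ‖q ^ (2 * (k₁ + 1) * (m₁ + m₂) + 2 * (k₂ + 1) * m₂ + (m₁ + m₂) ^ 2)‖
        ≤ ‖q‖ ^ (k₂ + k₁) := hnum
      _ = ((1 - ‖q‖)⁻¹ ^ (m₁ + m₂ + 2) * (‖q‖ ^ k₂ * ‖q‖ ^ k₁)) * (1 - ‖q‖) ^ (m₁ + m₂ + 2) := by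
          rw [pow_add]
          rw [mul_comm ((1 - ‖q‖)⁻¹ ^ (m₁ + m₂ + 2)) _, mul_assoc, keyC, mul_one]
      _ ≤ _ := by
          apply mul_le_mul_of_nonneg_left hD
          positivity
  -- swap the two sums
  have hcomm : (∑' k₂ : ℕ, ∑' k₁ : ℕ, F k₂ k₁) = ∑' k₁ : ℕ, ∑' k₂ : ℕ, F k₂ k₁ :=
    (Summable.tsum_comm hsum).symm
  -- inner sum (over k₂) for fixed k₁
  set S₁ : ℕ → ℂ := fun k₁ =>
    q ^ (2 * (k₁ + 1) * (m₁ + m₂) + (m₁ + m₂) ^ 2) /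
        (∏ j ∈ Finset.range (m₁ + 1), (1 + q ^ (2 * (k₁ + 1) + 2 * j))) *
      (q ^ (2 * m₂) / ((1 - q ^ (2 * m₂)) *
        ∏ j ∈ Finset.range m₂, (1 + q ^ (2 * (1 + (k₁ + 1 + m₁)) + 2 * j)))) with hS₁def
  have hinner : ∀ k₁, HasSum (fun k₂ => F k₂ k₁) (S₁ k₁) := by
    intro k₁
    have h := (telescope hq' m₂ (k₁ + 1 + m₁) hm₂).mul_left
      (q ^ (2 * (k₁ + 1) * (m₁ + m₂) + (m₁ + m₂) ^ 2) /
        ∏ j ∈ Finset.range (m₁ + 1), (1 + q ^ (2 * (k₁ + 1) + 2 * j)))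
    have hfun : (fun k₂ => F k₂ k₁) = fun k₂ =>
        (q ^ (2 * (k₁ + 1) * (m₁ + m₂) + (m₁ + m₂) ^ 2) /
          ∏ j ∈ Finset.range (m₁ + 1), (1 + q ^ (2 * (k₁ + 1) + 2 * j))) *
        (q ^ (2 * (k₂ + 1) * m₂) /
          ∏ j ∈ Finset.range (m₂ + 1), (1 + q ^ (2 * (k₂ + 1 + (k₁ + 1 + m₁)) + 2 * j))) := by
      funext k₂
      rw [hF]
      show q ^ _ / _ = _
      rw [show ∏ j ∈ Finset.range (m₂ + 1),
            (1 + q ^ (2 * (k₁ + 1) + 2 * (k₂ + 1) + 2 * m₁ + 2 * j)) =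
          ∏ j ∈ Finset.range (m₂ + 1), (1 + q ^ (2 * (k₂ + 1 + (k₁ + 1 + m₁)) + 2 * j)) from
        Finset.prod_congr rfl fun j _ => by
          rw [show 2 * (k₁ + 1) + 2 * (k₂ + 1) + 2 * m₁ + 2 * j =
            2 * (k₂ + 1 + (k₁ + 1 + m₁)) + 2 * j from by ring]]
      rw [show 2 * (k₁ + 1) * (m₁ + m₂) + 2 * (k₂ + 1) * m₂ + (m₁ + m₂) ^ 2 =
          (2 * (k₁ + 1) * (m₁ + m₂) + (m₁ + m₂) ^ 2) + 2 * (k₂ + 1) * m₂ from by ring,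
        pow_add, mul_div_mul_comm]
    rw [hfun, hS₁def]
    exact h
  -- rewrite S₁ in telescoping form
  have hz₂ : (1 : ℂ) - q ^ (2 * m₂) ≠ 0 := one_sub_pow_ne hq' (by omega)
  set DB : ℂ := q ^ (2 * m₂) / (1 - q ^ (2 * m₂)) * q ^ ((m₁ + m₂) ^ 2) with hDB
  have hS1 : ∀ k₁, S₁ k₁ = DB * (q ^ (2 * (k₁ + 1) * (m₁ + m₂)) /
      ∏ j ∈ Finset.range (m₁ + m₂ + 1), (1 + q ^ (2 * (k₁ + 1 + 0) + 2 * j))) := by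
    intro k₁
    have hPQ : ∏ j ∈ Finset.range (m₁ + m₂ + 1), (1 + q ^ (2 * (k₁ + 1 + 0) + 2 * j)) =
        (∏ j ∈ Finset.range (m₁ + 1), (1 + q ^ (2 * (k₁ + 1) + 2 * j))) *
          ∏ j ∈ Finset.range m₂, (1 + q ^ (2 * (1 + (k₁ + 1 + m₁)) + 2 * j)) := by
      rw [show m₁ + m₂ + 1 = (m₁ + 1) + m₂ from by ring,
        Finset.prod_range_add (fun j => (1 + q ^ (2 * (k₁ + 1 + 0) + 2 * j))) (m₁ + 1) m₂]
      exact congrArg₂ _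
        (Finset.prod_congr rfl fun j _ => by
          rw [show 2 * (k₁ + 1 + 0) + 2 * j = 2 * (k₁ + 1) + 2 * j from by ring])
        (Finset.prod_congr rfl fun j _ => by
          rw [show 2 * (k₁ + 1 + 0) + 2 * (m₁ + 1 + j) =
            2 * (1 + (k₁ + 1 + m₁)) + 2 * j from by ring])
    have hP1 : (∏ j ∈ Finset.range (m₁ + 1), (1 + q ^ (2 * (k₁ + 1) + 2 * j))) ≠ 0 :=
      prod_ne hq' _ (fun j => 2 * (k₁ + 1) + 2 * j)
        (fun j => by show 1 ≤ 2 * (k₁ + 1) + 2 * j; omega)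
    have hR : (∏ j ∈ Finset.range m₂, (1 + q ^ (2 * (1 + (k₁ + 1 + m₁)) + 2 * j))) ≠ 0 :=
      prod_ne hq' _ (fun j => 2 * (1 + (k₁ + 1 + m₁)) + 2 * j)
        (fun j => by show 1 ≤ 2 * (1 + (k₁ + 1 + m₁)) + 2 * j; omega)
    rw [hS₁def, hDB, hPQ]
    field_simp
    ring
  -- outer sum via telescoping
  have houter := (telescope hq' (m₁ + m₂) 0 (by omega)).mul_left DB
  have houter' : (∑' k₁ : ℕ, S₁ k₁) = DB * (q ^ (2 * (m₁ + m₂)) /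
      ((1 - q ^ (2 * (m₁ + m₂))) *
        ∏ j ∈ Finset.range (m₁ + m₂), (1 + q ^ (2 * (1 + 0) + 2 * j)))) := by
    rw [show (fun k₁ : ℕ => S₁ k₁) = fun k₁ : ℕ => DB * (q ^ (2 * (k₁ + 1) * (m₁ + m₂)) /
        ∏ j ∈ Finset.range (m₁ + m₂ + 1), (1 + q ^ (2 * (k₁ + 1 + 0) + 2 * j))) from
      funext hS1]
    exact houter.tsum_eq
  -- finish
  have hIcc : ∏ j ∈ Finset.Icc 1 (m₁ + m₂), (1 + q ^ (2 * j)) =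
      ∏ j ∈ Finset.range (m₁ + m₂), (1 + q ^ (2 * (1 + 0) + 2 * j)) := by
    rw [← Finset.Ico_add_one_right_eq_Icc, Finset.prod_Ico_eq_prod_range]
    exact Finset.prod_congr (by norm_num) fun j _ => by
      rw [show 2 * (1 + j) = 2 * (1 + 0) + 2 * j from by ring]
  have hinner' : ∀ k₁ : ℕ, (∑' k₂ : ℕ, F k₂ k₁) = S₁ k₁ := fun k₁ => (hinner k₁).tsum_eq
  calc (∑' k₂ : ℕ, ∑' k₁ : ℕ, F k₂ k₁) = ∑' k₁ : ℕ, ∑' k₂ : ℕ, F k₂ k₁ := hcomm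
    _ = ∑' k₁ : ℕ, S₁ k₁ := by exact tsum_congr hinner'
    _ = DB * (q ^ (2 * (m₁ + m₂)) / ((1 - q ^ (2 * (m₁ + m₂))) *
        ∏ j ∈ Finset.range (m₁ + m₂), (1 + q ^ (2 * (1 + 0) + 2 * j)))) := houter'
    _ = q ^ (2 * (m₁ + m₂)) * q ^ (2 * m₂) * q ^ ((m₁ + m₂) ^ 2) /
        ((1 - q ^ (2 * (m₁ + m₂))) * (1 - q ^ (2 * m₂)) *
          ∏ j ∈ Finset.Icc 1 (m₁ + m₂), (1 + q ^ (2 * j))) := by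
        rw [hIcc, hDB]
        have hzn : (1 : ℂ) - q ^ (2 * (m₁ + m₂)) ≠ 0 := one_sub_pow_ne hq' (by omega)
        have hRn : (∏ j ∈ Finset.range (m₁ + m₂), (1 + q ^ (2 * (1 + 0) + 2 * j))) ≠ 0 :=
          prod_ne hq' _ (fun j => 2 * (1 + 0) + 2 * j)
            (fun j => by show 1 ≤ 2 * (1 + 0) + 2 * j; omega)
        field_simp
end

section
/- (Lemma 5, second identity.) For every complex number q with |q| < 1, every natural number k ≥ 0 and every integer n ≥ 2, ( ∏_{j=0}^{n-1} q^{2k+2j+2} ) / ( ∏_{j=0}^{n} (1 + q^{2k+2j+1}) ) = ( q / (1 - q^{2n}) ) · ( - ( ∏_{j=1}^{n-1} q^{2k+2j+2} ) / ( ∏_{j=0}^{n-1} (1 + q^{2k+2j+1}) ) + ( ∏_{j=1}^{n-1} q^{2k+2j+2} ) / ( ∏_{j=1}^{n} (1 + q^{2k+2j+1}) ) ). Equivalently, the numerator of the left-hand side equals q^{2kn + n(n+1)}. -/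
/-- Lemma 5, second identity: for `n ≥ 2`,
`(∏_{j=0}^{n-1} q^{2k+2j+2}) / (∏_{j=0}^{n} (1+q^{2k+2j+1}))
  = (q/(1-q^{2n})) (-(∏_{j=1}^{n-1} q^{2k+2j+2}) / (∏_{j=0}^{n-1} (1+q^{2k+2j+1}))
      + (∏_{j=1}^{n-1} q^{2k+2j+2}) / (∏_{j=1}^{n} (1+q^{2k+2j+1})))`. -/
theorem lemma5_second (q : ℂ) (hq : ‖q‖ < 1) (k : ℕ) (n : ℕ) (hn : 2 ≤ n) :
    (∏ j ∈ Finset.range n, q ^ (2 * k + 2 * j + 2)) /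
        ∏ j ∈ Finset.range (n + 1), (1 + q ^ (2 * k + 2 * j + 1)) =
      q / (1 - q ^ (2 * n)) *
        (-(∏ j ∈ Finset.Icc 1 (n - 1), q ^ (2 * k + 2 * j + 2)) /
            (∏ j ∈ Finset.range n, (1 + q ^ (2 * k + 2 * j + 1))) +
          (∏ j ∈ Finset.Icc 1 (n - 1), q ^ (2 * k + 2 * j + 2)) /
            ∏ j ∈ Finset.Icc 1 n, (1 + q ^ (2 * k + 2 * j + 1))) := by
  obtain ⟨m, rfl⟩ : ∃ m, n = m + 2 := ⟨n - 2, by omega⟩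
  -- basic nonvanishing facts
  have habs : ∀ r : ℕ, 1 ≤ r → 1 + q ^ r ≠ 0 := by
    intro r hr h
    have h1 : q ^ r = -1 := by linear_combination h
    have : ‖q ^ r‖ < 1 := by
      rw [norm_pow]
      exact pow_lt_one₀ (norm_nonneg q) hq (by omega)
    rw [h1] at this
    simp at this
  have hone : (1 : ℂ) - q ^ (2 * (m + 2)) ≠ 0 := by
    intro h
    have h1 : q ^ (2 * (m + 2)) = 1 := by linear_combination -h
    have : ‖q ^ (2 * (m + 2))‖ < 1 := by
      rw [norm_pow]
      exact pow_lt_one₀ (norm_nonneg q) hq (by omega)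
    rw [h1] at this
    simp at this
  -- rewrite Icc products as range products
  have hIcc1 : Finset.Icc 1 (m + 2 - 1) = Finset.Icc 1 (m + 1) := by norm_num
  have hIR : ∀ (N : ℕ) (f : ℕ → ℂ), ∏ j ∈ Finset.Icc 1 N, f j =
      ∏ i ∈ Finset.range N, f (1 + i) := by
    intro N f
    rw [← Finset.Ico_add_one_right_eq_Icc, Finset.prod_Ico_eq_prod_range]
    simp
  rw [hIcc1, hIR, hIR]
  set P := ∏ i ∈ Finset.range (m + 1), q ^ (2 * k + 2 * (1 + i) + 2) with hP
  -- peel factors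
  have hA : ∏ j ∈ Finset.range (m + 2), (1 + q ^ (2 * k + 2 * j + 1)) =
      (1 + q ^ (2 * k + 1)) *
        ∏ i ∈ Finset.range (m + 1), (1 + q ^ (2 * k + 2 * (1 + i) + 1)) := by
    rw [Finset.prod_range_succ', mul_comm]
    congr 1
    · exact Finset.prod_congr rfl fun i _ => by
        rw [show 2 * k + 2 * (i + 1) + 1 = 2 * k + 2 * (1 + i) + 1 from by ring]
  have hB : ∏ i ∈ Finset.range (m + 2), (1 + q ^ (2 * k + 2 * (1 + i) + 1)) =
      (∏ i ∈ Finset.range (m + 1), (1 + q ^ (2 * k + 2 * (1 + i) + 1))) *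
        (1 + q ^ (2 * k + 2 * (1 + (m + 1)) + 1)) := Finset.prod_range_succ _ _
  have hD : ∏ j ∈ Finset.range (m + 2 + 1), (1 + q ^ (2 * k + 2 * j + 1)) =
      (∏ j ∈ Finset.range (m + 2), (1 + q ^ (2 * k + 2 * j + 1))) *
        (1 + q ^ (2 * k + 2 * (m + 2) + 1)) := Finset.prod_range_succ _ _
  have hN : ∏ j ∈ Finset.range (m + 2), q ^ (2 * k + 2 * j + 2) =
      q ^ (2 * k + 2) * P := by
    rw [hP, Finset.prod_range_succ', mul_comm]
    congr 1
    · exact Finset.prod_congr rfl fun i _ => by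
        rw [show 2 * k + 2 * (i + 1) + 2 = 2 * k + 2 * (1 + i) + 2 from by ring]
  set C := ∏ i ∈ Finset.range (m + 1), (1 + q ^ (2 * k + 2 * (1 + i) + 1)) with hC
  have hCne : C ≠ 0 := Finset.prod_ne_zero_iff.mpr fun i _ => habs _ (by omega)
  have hf0 : (1 : ℂ) + q ^ (2 * k + 1) ≠ 0 := habs _ (by omega)
  have hfn : (1 : ℂ) + q ^ (2 * k + 2 * (1 + (m + 1)) + 1) ≠ 0 := habs _ (by omega)
  have hfn' : (1 : ℂ) + q ^ (2 * k + 2 * (m + 2) + 1) ≠ 0 := habs _ (by omega)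
  have hexp : 2 * k + 2 * (1 + (m + 1)) + 1 = 2 * k + 2 * (m + 2) + 1 := by ring
  rw [hN, hD, hA, hB, hexp]
  field_simp
  ring_nf
end

section
/- (Lemma 6.) For every complex number q with |q| < 1 and every integer m ≥ 1, ∑_{k=1}^{∞} q^{2km + m(m+1)} / ( ∏_{j=0}^{m} (1 + q^{2k+2j+1}) ) = ( q^{2m} / (1 - q^{2m}) ) · q^{m(m+1)} / ( ∏_{j=1}^{m} (1 + q^{2j+1}) ). Here q^{2km + m(m+1)} = q^{2k+2} · q^{2k+4} ⋯ q^{2k+2m} and q^{m(m+1)} = q^2 · q^4 ⋯ q^{2m}; the series converges absolutely since |q| < 1. -/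
open Finset Filter

/-- Lemma 6: for `m ≥ 1`,
`∑_{k=1}^∞ q^{2km+m(m+1)} / ∏_{j=0}^{m} (1+q^{2k+2j+1})
  = (q^{2m}/(1-q^{2m})) · q^{m(m+1)} / ∏_{j=1}^{m} (1+q^{2j+1})`.
The sum over `k ≥ 1` is written as a sum over `k : ℕ` with `k` replaced by `k + 1`. -/
theorem lemma6 (q : ℂ) (hq : ‖q‖ < 1) (m : ℕ) (hm : 1 ≤ m) :
    (∑' k : ℕ, q ^ (2 * (k + 1) * m + m * (m + 1)) /
        ∏ j ∈ Finset.range (m + 1), (1 + q ^ (2 * (k + 1) + 2 * j + 1))) =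
      q ^ (2 * m) / (1 - q ^ (2 * m)) *
        (q ^ (m * (m + 1)) / ∏ j ∈ Finset.Icc 1 m, (1 + q ^ (2 * j + 1))) := by
  have hq' : ‖q‖ < 1 := hq
  set r : ℝ := ‖q‖ with hr
  have hr0 : 0 ≤ r := norm_nonneg q
  have hr1 : r < 1 := hq'
  have hrpos : (0 : ℝ) < 1 - r := by linarith
  -- lower bound on factors, and nonvanishing
  have hfac : ∀ n : ℕ, 1 ≤ n → (1 : ℝ) - r ≤ ‖1 + q ^ n‖ := by
    intro n hn
    have h1 : ‖q ^ n‖ ≤ r := by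
      rw [norm_pow]
      calc r ^ n ≤ r ^ 1 := pow_le_pow_of_le_one hr0 hr1.le hn
        _ = r := pow_one r
    calc (1 : ℝ) - r ≤ 1 - ‖q ^ n‖ := by linarith
      _ ≤ ‖1 + q ^ n‖ := by
          have h5 : ‖(1 + q ^ n) - q ^ n‖ ≤ ‖1 + q ^ n‖ + ‖q ^ n‖ := norm_sub_le _ _
          simp only [add_sub_cancel_right, norm_one] at h5
          linarith
  have hfac0 : ∀ n : ℕ, 1 ≤ n → (1 + q ^ n) ≠ 0 := by
    intro n hn h0
    have := hfac n hn
    rw [h0] at this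
    simp only [norm_zero] at this
    linarith
  have hD : (1 : ℂ) - q ^ (2 * m) ≠ 0 := by
    intro h0
    have h1 : q ^ (2 * m) = 1 := by linear_combination -h0
    have h2 : ‖q ^ (2 * m)‖ < 1 := by
      rw [norm_pow]
      exact pow_lt_one₀ hr0 hr1 (by omega)
    rw [h1] at h2; simp at h2
  have hDnorm : (0 : ℝ) < ‖(1 : ℂ) - q ^ (2 * m)‖ := norm_pos_iff.2 hD
  have hPne : ∀ a n : ℕ, (∏ j ∈ Finset.range n, (1 + q ^ (2 * (a + 1) + 2 * j + 1))) ≠ 0 :=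
    fun a n => Finset.prod_ne_zero_iff.2 fun j _ => hfac0 _ (by omega)
  have hPlow : ∀ a n : ℕ,
      (1 - r) ^ n ≤ ‖∏ j ∈ Finset.range n, (1 + q ^ (2 * (a + 1) + 2 * j + 1))‖ := by
    intro a n
    rw [norm_prod]
    calc (1 - r) ^ n = ∏ _j ∈ Finset.range n, (1 - r) := by
          rw [Finset.prod_const, Finset.card_range]
      _ ≤ ∏ j ∈ Finset.range n, ‖1 + q ^ (2 * (a + 1) + 2 * j + 1)‖ :=
          Finset.prod_le_prod (fun j _ => hrpos.le) (fun j _ => hfac _ (by omega))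
  -- the telescoping sequence and the summand
  set b : ℕ → ℂ := fun k => q ^ (2 * (k + 1) * m + m * (m + 1)) /
      ((1 - q ^ (2 * m)) * ∏ j ∈ Finset.range m, (1 + q ^ (2 * (k + 1) + 2 * j + 1))) with hb
  set f : ℕ → ℂ := fun k => q ^ (2 * (k + 1) * m + m * (m + 1)) /
      ∏ j ∈ Finset.range (m + 1), (1 + q ^ (2 * (k + 1) + 2 * j + 1)) with hf
  -- Step 1 : telescoping identity
  have key : ∀ k : ℕ, f k = b k - b (k + 1) := by
    intro k
    have h1 : (∏ j ∈ Finset.range (m + 1), (1 + q ^ (2 * (k + 1) + 2 * j + 1)))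
        = (∏ j ∈ Finset.range m, (1 + q ^ (2 * (k + 1) + 2 * j + 1)))
          * (1 + q ^ (2 * (k + 1) + 2 * m + 1)) := Finset.prod_range_succ _ m
    have h2 : (∏ j ∈ Finset.range (m + 1), (1 + q ^ (2 * (k + 1) + 2 * j + 1)))
        = (∏ j ∈ Finset.range m, (1 + q ^ (2 * (k + 1 + 1) + 2 * j + 1)))
          * (1 + q ^ (2 * (k + 1) + 2 * 0 + 1)) := by
      rw [Finset.prod_range_succ' (fun j => 1 + q ^ (2 * (k + 1) + 2 * j + 1)) m]
      congr 1
      exact Finset.prod_congr rfl fun j _ => by congr 2; ring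
    simp only [hf, hb]
    set P0 := ∏ j ∈ Finset.range m, (1 + q ^ (2 * (k + 1) + 2 * j + 1)) with hP0
    set P1 := ∏ j ∈ Finset.range m, (1 + q ^ (2 * (k + 1 + 1) + 2 * j + 1)) with hP1
    have hP0ne : P0 ≠ 0 := hPne k m
    have hP1ne : P1 ≠ 0 := hPne (k + 1) m
    have hQne : (∏ j ∈ Finset.range (m + 1), (1 + q ^ (2 * (k + 1) + 2 * j + 1))) ≠ 0 :=
      hPne k (m + 1)
    rw [div_sub_div _ _ (mul_ne_zero hD hP0ne) (mul_ne_zero hD hP1ne),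
      div_eq_div_iff hQne (mul_ne_zero (mul_ne_zero hD hP0ne) (mul_ne_zero hD hP1ne))]
    linear_combination (-(q ^ (2 * (k + 1) * m + m * (m + 1)) * (1 - q ^ (2 * m)) * P1)) * h1
      + ((1 - q ^ (2 * m)) * P0 * q ^ (2 * (k + 1) * m + m * (m + 1)) * q ^ (2 * m)) * h2
  -- geometric bound on the numerator
  have hnum : ∀ k : ℕ, ‖q ^ (2 * (k + 1) * m + m * (m + 1))‖ ≤ (r ^ 2) ^ k := by
    intro k
    rw [norm_pow, ← pow_mul]
    exact pow_le_pow_of_le_one hr0 hr1.le (by nlinarith)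
  -- Step 2 : summability (in norm) of the summand
  have hbound : ∀ k : ℕ, ‖f k‖ ≤ (1 / (1 - r) ^ (m + 1)) * (r ^ 2) ^ k := by
    intro k
    simp only [hf]
    rw [norm_div]
    calc ‖q ^ (2 * (k + 1) * m + m * (m + 1))‖ /
          ‖∏ j ∈ Finset.range (m + 1), (1 + q ^ (2 * (k + 1) + 2 * j + 1))‖
        ≤ (r ^ 2) ^ k / (1 - r) ^ (m + 1) :=
          div_le_div₀ (by positivity) (hnum k) (pow_pos hrpos _) (hPlow k (m + 1))
      _ = (1 / (1 - r) ^ (m + 1)) * (r ^ 2) ^ k := by ring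
  have hsumnorm : Summable fun k => ‖f k‖ := by
    apply Summable.of_nonneg_of_le (fun k => norm_nonneg _) hbound
    exact (summable_geometric_of_lt_one (by positivity) (by nlinarith)).mul_left _
  -- Step 3 : b tends to 0
  have hbbound : ∀ k : ℕ, ‖b k‖ ≤ (1 / (‖(1 : ℂ) - q ^ (2 * m)‖ * (1 - r) ^ m)) * (r ^ 2) ^ k := by
    intro k
    simp only [hb]
    rw [norm_div, norm_mul]
    have h1 : (0 : ℝ) < ‖(1 : ℂ) - q ^ (2 * m)‖ * (1 - r) ^ m :=
      mul_pos hDnorm (pow_pos hrpos _)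
    have h2 : ‖(1 : ℂ) - q ^ (2 * m)‖ * (1 - r) ^ m ≤
        ‖(1 : ℂ) - q ^ (2 * m)‖ * ‖∏ j ∈ Finset.range m, (1 + q ^ (2 * (k + 1) + 2 * j + 1))‖ :=
      mul_le_mul_of_nonneg_left (hPlow k m) hDnorm.le
    calc ‖q ^ (2 * (k + 1) * m + m * (m + 1))‖ /
          (‖(1 : ℂ) - q ^ (2 * m)‖ * ‖∏ j ∈ Finset.range m, (1 + q ^ (2 * (k + 1) + 2 * j + 1))‖)
        ≤ (r ^ 2) ^ k / (‖(1 : ℂ) - q ^ (2 * m)‖ * (1 - r) ^ m) :=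
          div_le_div₀ (by positivity) (hnum k) h1 h2
      _ = (1 / (‖(1 : ℂ) - q ^ (2 * m)‖ * (1 - r) ^ m)) * (r ^ 2) ^ k := by ring
  have hbtend : Tendsto b atTop (nhds 0) := by
    apply squeeze_zero_norm hbbound
    have := (tendsto_pow_atTop_nhds_zero_of_lt_one (by positivity : (0:ℝ) ≤ r ^ 2)
      (by nlinarith : r ^ 2 < 1)).const_mul (1 / (‖(1 : ℂ) - q ^ (2 * m)‖ * (1 - r) ^ m))
    simpa using this
  -- Step 4 : partial sums of f tend to b 0
  have hpartial : Tendsto (fun n => ∑ i ∈ Finset.range n, f i) atTop (nhds (b 0)) := by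
    have heq : ∀ n : ℕ, ∑ i ∈ Finset.range n, f i = b 0 - b n := by
      intro n
      rw [Finset.sum_congr rfl fun i _ => key i]
      exact Finset.sum_range_sub' b n
    simp only [heq]
    simpa using tendsto_const_nhds.sub hbtend
  have hhs : HasSum f (b 0) := (hasSum_iff_tendsto_nat_of_summable_norm hsumnorm).mpr hpartial
  rw [hhs.tsum_eq]
  -- Step 5 : identify b 0 with the right-hand side
  have hprod : (∏ j ∈ Finset.Icc 1 m, (1 + q ^ (2 * j + 1)))
      = ∏ j ∈ Finset.range m, (1 + q ^ (2 * (0 + 1) + 2 * j + 1)) := by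
    rw [show Finset.Icc 1 m = Finset.Ico 1 (m + 1) by rw [Finset.Ico_add_one_right_eq_Icc],
      Finset.prod_Ico_eq_prod_range]
    simp only [Nat.add_sub_cancel]
    exact Finset.prod_congr rfl fun j _ => by congr 2; ring
  simp only [hb, hprod]
  rw [div_mul_div_comm, ← pow_add,
    show 2 * m + m * (m + 1) = 2 * (0 + 1) * m + m * (m + 1) by ring]
end
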